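/- arXiv:1606.04215 — 6 statements merged into one kernel-verified Lean document; each statement's English description precedes it below -/
import Mathlib

section
/- Fix T > 0, a ∈ ℝ, b < 0, and let u be a non-constant real T-periodic C² solution of u'' + a u + b u³ = 0 with u(0) = max u > 0. Then a > 0, 0 < |b| u(0)² < a, and there exist unique α > 0, β > 0, k ∈ (0,1) satisfying b β² = −2k² α² such that u(x) = (1/α) sn(K(k) + x/β, k). -/
open Set Filter Topology

set_option maxHeartbeats 1000000

section helpers

private lemma affine_comp (w : ℝ → ℝ) (hw : ContDiff ℝ 2 w) (c m q : ℝ) :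
    ContDiff ℝ 2 (fun x => c * w (m * x + q)) ∧
    deriv (fun x => c * w (m * x + q)) = (fun x => c * m * deriv w (m * x + q)) ∧
    deriv (deriv (fun x => c * w (m * x + q))) =
      (fun x => c * m ^ 2 * deriv (deriv w) (m * x + q)) := by
  have hw1 : Differentiable ℝ w := hw.differentiable two_ne_zero
  have hw2 : ContDiff ℝ 1 (deriv w) := by
    have h := (contDiff_succ_iff_deriv (n := 1)).mp (by exact_mod_cast hw)
    exact h.2.2
  have hw2' : Differentiable ℝ (deriv w) := hw2.differentiable one_ne_zero
  have haff : ∀ x : ℝ, HasDerivAt (fun x : ℝ => m * x + q) m x := by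
    intro x
    simpa using ((hasDerivAt_id x).const_mul m).add_const q
  have hd1 : ∀ x, HasDerivAt (fun x => c * w (m * x + q)) (c * m * deriv w (m * x + q)) x := by
    intro x
    have h := ((hw1 (m * x + q)).hasDerivAt.comp x (haff x)).const_mul c
    exact h.congr_deriv (by ring)
  have hderiv1 : deriv (fun x => c * w (m * x + q)) = fun x => c * m * deriv w (m * x + q) :=
    funext fun x => (hd1 x).deriv
  have hd2 : ∀ x, HasDerivAt (fun x => c * m * deriv w (m * x + q))
      (c * m ^ 2 * deriv (deriv w) (m * x + q)) x := by
    intro x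
    have h := ((hw2' (m * x + q)).hasDerivAt.comp x (haff x)).const_mul (c * m)
    exact h.congr_deriv (by ring)
  refine ⟨?_, hderiv1, ?_⟩
  · have : ContDiff ℝ 2 (fun x : ℝ => m * x + q) := by fun_prop
    exact contDiff_const.mul (hw.comp this)
  · rw [hderiv1]
    exact funext fun x => (hd2 x).deriv

private lemma ode2_unique (c₁ c₃ : ℝ) (f g : ℝ → ℝ)
    (hf : ContDiff ℝ 2 f) (hg : ContDiff ℝ 2 g)
    (hf2 : ∀ x, deriv (deriv f) x = c₁ * f x + c₃ * (f x)^3)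
    (hg2 : ∀ x, deriv (deriv g) x = c₁ * g x + c₃ * (g x)^3)
    (t₀ : ℝ) (h0 : f t₀ = g t₀) (h1 : deriv f t₀ = deriv g t₀) :
    ∀ x, f x = g x := by
  have hfd : Differentiable ℝ f := hf.differentiable two_ne_zero
  have hgd : Differentiable ℝ g := hg.differentiable two_ne_zero
  have hfd2 : Differentiable ℝ (deriv f) := by
    have h := (contDiff_succ_iff_deriv (n := 1)).mp (by exact_mod_cast hf)
    exact h.2.2.differentiable one_ne_zero
  have hgd2 : Differentiable ℝ (deriv g) := by
    have h := (contDiff_succ_iff_deriv (n := 1)).mp (by exact_mod_cast hg)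
    exact h.2.2.differentiable one_ne_zero
  set F : ℝ × ℝ → ℝ × ℝ := fun p => (p.2, c₁ * p.1 + c₃ * p.1 ^ 3) with hF
  set vf : ℝ → ℝ × ℝ := fun t => (f t, deriv f t) with hvf
  set vg : ℝ → ℝ × ℝ := fun t => (g t, deriv g t) with hvg
  have hvfc : Continuous vf := (hfd.continuous).prodMk (hfd2.continuous)
  have hvgc : Continuous vg := (hgd.continuous).prodMk (hgd2.continuous)
  have hvf' : ∀ t, HasDerivAt vf (F (vf t)) t := by
    intro t
    have h1' : HasDerivAt f (deriv f t) t := (hfd t).hasDerivAt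
    have h2' : HasDerivAt (deriv f) (c₁ * f t + c₃ * (f t)^3) t := by
      have := (hfd2 t).hasDerivAt
      rwa [hf2 t] at this
    exact h1'.prodMk h2'
  have hvg' : ∀ t, HasDerivAt vg (F (vg t)) t := by
    intro t
    have h1' : HasDerivAt g (deriv g t) t := (hgd t).hasDerivAt
    have h2' : HasDerivAt (deriv g) (c₁ * g t + c₃ * (g t)^3) t := by
      have := (hgd2 t).hasDerivAt
      rwa [hg2 t] at this
    exact h1'.prodMk h2'
  intro x
  -- work on a compact interval around t₀ and x
  set R : ℝ := |x - t₀| + 1 with hR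
  have hRpos : 0 < R := by positivity
  have hx : x ∈ Icc (t₀ - R) (t₀ + R) := by
    constructor <;> [skip; skip] <;>
      · rcases abs_sub_lt_iff.mp (show |x - t₀| < R by rw [hR]; linarith) with ⟨h1', h2'⟩
        linarith
  have ht₀ : t₀ ∈ Ioo (t₀ - R) (t₀ + R) := by constructor <;> linarith
  -- bound both trajectories
  obtain ⟨Mf, hMf⟩ := (isCompact_Icc (a := t₀ - R) (b := t₀ + R)).exists_bound_of_continuousOn
    hvfc.continuousOn
  obtain ⟨Mg, hMg⟩ := (isCompact_Icc (a := t₀ - R) (b := t₀ + R)).exists_bound_of_continuousOn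
    hvgc.continuousOn
  set M : ℝ := max Mf Mg with hM
  have hMnn : 0 ≤ M := le_trans (norm_nonneg (vf t₀)) (le_trans (hMf t₀ (Ioo_subset_Icc_self ht₀)) (le_max_left _ _))
  -- Lipschitz bound on the closed ball
  set L : ℝ := 1 + |c₁| + 3 * |c₃| * M ^ 2 with hL
  have hLnn : 0 ≤ L := by positivity
  have hlip : LipschitzOnWith L.toNNReal F (Metric.closedBall (0 : ℝ × ℝ) M) := by
    rw [lipschitzOnWith_iff_dist_le_mul]
    intro p hp p' hp'
    rw [Real.coe_toNNReal _ hLnn]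
    have hp1 : |p.1| ≤ M := by
      have := mem_closedBall_zero_iff.mp hp
      calc |p.1| = ‖p.1‖ := (Real.norm_eq_abs _).symm
        _ ≤ ‖p‖ := norm_fst_le p
        _ ≤ M := this
    have hp'1 : |p'.1| ≤ M := by
      have := mem_closedBall_zero_iff.mp hp'
      calc |p'.1| = ‖p'.1‖ := (Real.norm_eq_abs _).symm
        _ ≤ ‖p'‖ := norm_fst_le p'
        _ ≤ M := this
    rw [Prod.dist_eq, Prod.dist_eq]
    simp only [hF, Real.dist_eq]
    have key : |c₁ * p.1 + c₃ * p.1 ^ 3 - (c₁ * p'.1 + c₃ * p'.1 ^ 3)|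
        ≤ (|c₁| + 3 * |c₃| * M ^ 2) * |p.1 - p'.1| := by
      have h3 : c₁ * p.1 + c₃ * p.1 ^ 3 - (c₁ * p'.1 + c₃ * p'.1 ^ 3)
          = (c₁ + c₃ * (p.1^2 + p.1 * p'.1 + p'.1^2)) * (p.1 - p'.1) := by ring
      rw [h3, abs_mul]
      gcongr
      calc |c₁ + c₃ * (p.1^2 + p.1 * p'.1 + p'.1^2)|
          ≤ |c₁| + |c₃| * |p.1^2 + p.1 * p'.1 + p'.1^2| := by
            refine (abs_add_le _ _).trans ?_
            rw [abs_mul]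
        _ ≤ |c₁| + |c₃| * (3 * M^2) := by
            gcongr
            have h1' := abs_mul_abs_self p.1
            have h2' := abs_mul_abs_self p'.1
            have habs : |p.1 * p'.1| ≤ M * M := by
              rw [abs_mul]; exact mul_le_mul hp1 hp'1 (abs_nonneg _) hMnn
            calc |p.1^2 + p.1 * p'.1 + p'.1^2|
                ≤ |p.1^2| + |p.1 * p'.1| + |p'.1^2| := abs_add_three _ _ _
              _ ≤ 3 * M^2 := by
                  rw [abs_pow, abs_pow]
                  nlinarith [abs_nonneg p.1, abs_nonneg p'.1, pow_le_pow_left₀ (abs_nonneg p.1) hp1 2, pow_le_pow_left₀ (abs_nonneg p'.1) hp'1 2]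
        _ = |c₁| + 3 * |c₃| * M ^ 2 := by ring
    have hd1 : |p.2 - p'.2| ≤ max |p.1 - p'.1| |p.2 - p'.2| := le_max_right _ _
    have hd2 : |p.1 - p'.1| ≤ max |p.1 - p'.1| |p.2 - p'.2| := le_max_left _ _
    have hmaxnn : 0 ≤ max |p.1 - p'.1| |p.2 - p'.2| := le_trans (abs_nonneg _) hd2
    have hcoefnn : 0 ≤ |c₁| + 3 * |c₃| * M ^ 2 := by positivity
    have h1L : (1:ℝ) ≤ L := by rw [hL]; linarith
    have hcoef : |c₁| + 3 * |c₃| * M ^ 2 ≤ L := by rw [hL]; linarith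
    apply max_le
    · exact hd1.trans (le_mul_of_one_le_left hmaxnn h1L)
    · calc |c₁ * p.1 + c₃ * p.1 ^ 3 - (c₁ * p'.1 + c₃ * p'.1 ^ 3)|
          ≤ (|c₁| + 3 * |c₃| * M ^ 2) * |p.1 - p'.1| := key
        _ ≤ L * max |p.1 - p'.1| |p.2 - p'.2| :=
            mul_le_mul hcoef hd2 (abs_nonneg _) (hLnn.trans (le_of_eq rfl) |>.trans (le_refl L))
  -- apply uniqueness
  have heq : EqOn vf vg (Icc (t₀ - R) (t₀ + R)) := by
    apply ODE_solution_unique_of_mem_Icc (v := fun _ p => F p)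
      (s := fun _ => Metric.closedBall (0 : ℝ × ℝ) M) (fun _ _ => hlip) ht₀
      hvfc.continuousOn (fun t _ => hvf' t) ?_ hvgc.continuousOn (fun t _ => hvg' t) ?_ ?_
    · intro t ht
      exact mem_closedBall_zero_iff.mpr (le_trans (hMf t (Ioo_subset_Icc_self ht)) (le_max_left _ _))
    · intro t ht
      exact mem_closedBall_zero_iff.mpr (le_trans (hMg t (Ioo_subset_Icc_self ht)) (le_max_right _ _))
    · rw [hvf, hvg]
      simp only [h0, h1]
  have := heq hx
  exact congrArg Prod.fst this

private lemma no_max_of_dd_pos (f : ℝ → ℝ) (hf : ContDiff ℝ 2 f)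
    (hmax : ∀ x, f x ≤ f 0) (h2 : 0 < deriv (deriv f) 0) : False := by
  have hfd : Differentiable ℝ f := hf.differentiable two_ne_zero
  have hfd2 : Differentiable ℝ (deriv f) := by
    have h := (contDiff_succ_iff_deriv (n := 1)).mp (by exact_mod_cast hf)
    exact h.2.2.differentiable one_ne_zero
  have h1 : deriv f 0 = 0 :=
    IsLocalMax.deriv_eq_zero (Filter.Eventually.of_forall hmax)
  have hD : HasDerivAt (deriv f) (deriv (deriv f) 0) 0 := (hfd2 0).hasDerivAt
  rw [hasDerivAt_iff_tendsto_slope] at hD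
  have hev : ∀ᶠ x in 𝓝[≠] (0:ℝ), 0 < slope (deriv f) 0 x :=
    hD.eventually (eventually_gt_nhds h2)
  have hev' : ∀ᶠ x in 𝓝[>] (0:ℝ), 0 < slope (deriv f) 0 x :=
    hev.filter_mono (nhdsWithin_mono _ (fun x hx => ne_of_gt hx))
  obtain ⟨ε, hε, hsub⟩ := mem_nhdsGT_iff_exists_Ioo_subset.mp hev'
  have hεpos : 0 < ε := hε
  have hpos : ∀ x ∈ Ioo (0:ℝ) ε, 0 < deriv f x := by
    intro x hx
    have hs := hsub hx
    simp only [mem_setOf_eq] at hs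
    have : slope (deriv f) 0 x = deriv f x / x := by
      rw [slope_def_field, h1]
      simp
    rw [this] at hs
    have hx0 : 0 < x := hx.1
    by_contra hle
    push_neg at hle
    have : deriv f x / x ≤ 0 := div_nonpos_of_nonpos_of_nonneg hle hx0.le
    linarith
  have hmono : StrictMonoOn f (Icc 0 (ε/2)) := by
    apply strictMonoOn_of_deriv_pos (convex_Icc _ _) (hfd.continuous.continuousOn)
    intro x hx
    rw [interior_Icc] at hx
    exact hpos x ⟨hx.1, hx.2.trans (by linarith)⟩
  have : f 0 < f (ε/2) :=
    hmono ⟨le_refl _, by linarith⟩ ⟨by linarith, le_refl _⟩ (by linarith)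
  linarith [hmax (ε/2)]
end helpers

/-- Classification of non-constant real periodic waves, defocusing case:
any such solution of `u'' + a u + b u³ = 0` (with `b < 0`) is a rescaled
snoidal function. Here `sn k` denotes the Jacobi elliptic sine of modulus `k`,
characterized as the solution of `v'' + (1+k²)v − 2k²v³ = 0` with
`v(K k) = 1`, `v'(K k) = 0`. -/
theorem stmt_6 (T a b : ℝ) (hT : 0 < T) (hb : b < 0)
    (sn : ℝ → ℝ → ℝ) (K : ℝ → ℝ)
    (hsn : ∀ k, 0 < k → k < 1 →
      ContDiff ℝ 2 (sn k) ∧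
      (∀ x, deriv (deriv (sn k)) x + (1 + k^2) * sn k x - 2 * k^2 * (sn k x)^3 = 0) ∧
      sn k (K k) = 1 ∧ deriv (sn k) (K k) = 0)
    (u : ℝ → ℝ) (hu : ContDiff ℝ 2 u)
    (hper : ∀ x, u (x + T) = u x)
    (hnc : ¬ ∃ c : ℝ, ∀ x, u x = c)
    (hode : ∀ x, deriv (deriv u) x + a * u x + b * (u x)^3 = 0)
    (hmax : ∀ x, u x ≤ u 0) (hpos : 0 < u 0) :
    0 < a ∧ 0 < |b| * (u 0)^2 ∧ |b| * (u 0)^2 < a ∧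
    ∃! p : ℝ × ℝ × ℝ,
      0 < p.1 ∧ 0 < p.2.1 ∧ p.2.2 ∈ Set.Ioo (0:ℝ) 1 ∧
      b * p.2.1^2 = -(2 * p.2.2^2 * p.1^2) ∧
      ∀ x, u x = (1 / p.1) * sn p.2.2 (K p.2.2 + x / p.2.1) := by
  set u0 : ℝ := u 0 with hu0def
  have hu0 : 0 < u0 := hpos
  have habsb : |b| = -b := abs_of_neg hb
  have hbe : 0 < |b| * u0 ^ 2 := by
    have : 0 < |b| := abs_pos.mpr (ne_of_lt hb)
    positivity
  have hdd : ∀ x, deriv (deriv u) x = (-a) * u x + (-b) * (u x)^3 := by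
    intro x; have := hode x; linarith
  have hder0 : deriv u 0 = 0 :=
    IsLocalMax.deriv_eq_zero (Filter.Eventually.of_forall hmax)
  -- strict inequality |b| u0² < a
  have hkey : |b| * u0 ^ 2 < a := by
    by_contra h
    push_neg at h
    rcases lt_or_eq_of_le h with hlt | heq
    · -- a < |b| u0² : second derivative at 0 is positive, contradicting max
      apply no_max_of_dd_pos u hu hmax
      rw [hdd 0]
      have : (-a) * u0 + (-b) * u0 ^ 3 = u0 * (|b| * u0^2 - a) := by
        rw [habsb]; ring
      rw [← hu0def, this]
      exact mul_pos hu0 (by linarith)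
    · -- a = |b| u0² : u coincides with the constant u0, contradiction
      have hconst : ∀ x, u x = u0 := by
        apply ode2_unique (-a) (-b) u (fun _ => u0) hu contDiff_const hdd ?_ 0 rfl ?_
        · intro x
          rw [habsb] at heq
          simp only [deriv_const']
          rw [heq]; ring
        · rw [hder0, deriv_const']
      exact absurd ⟨u0, hconst⟩ hnc
  have ha : 0 < a := lt_trans hbe hkey
  refine ⟨ha, hbe, hkey, ?_⟩
  -- construction of the parameters
  set D : ℝ := a - |b| * u0 ^ 2 / 2 with hDdef
  have hD : 0 < D := by rw [hDdef]; linarith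
  set β : ℝ := Real.sqrt (1 / D) with hβdef
  set k : ℝ := Real.sqrt (|b| * u0 ^ 2 / (2 * D)) with hkdef
  have hβpos : 0 < β := Real.sqrt_pos.mpr (by positivity)
  have hkpos : 0 < k := Real.sqrt_pos.mpr (by positivity)
  have hβsq : β ^ 2 = 1 / D := Real.sq_sqrt (by positivity)
  have hksq : k ^ 2 = |b| * u0 ^ 2 / (2 * D) := Real.sq_sqrt (by positivity)
  have hksqlt : k ^ 2 < 1 := by
    rw [hksq, div_lt_one (by positivity)]
    rw [hDdef]; linarith
  have hklt : k < 1 := by nlinarith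
  obtain ⟨hsnC, hsnODE, hsnK, hsnK'⟩ := hsn k hkpos hklt
  -- key coefficient identities
  have hc1 : β ^ 2 * a = 1 + k ^ 2 := by
    rw [hβsq, hksq]
    field_simp
    rw [hDdef]; ring
  have hu0ne : u0 ≠ 0 := ne_of_gt hu0
  have hc2' : b * β ^ 2 * u0 ^ 2 = -(2 * k ^ 2) := by
    rw [hβsq, hksq, habsb]
    field_simp
  have hc2 : b * β ^ 2 = -(2 * k ^ 2 * (1 / u0) ^ 2) := by
    have h := hc2'
    field_simp at h ⊢
    linarith
  -- the rescaled solution coincides with sn k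
  obtain ⟨hgC, hg1, hg2⟩ := affine_comp u hu (1 / u0) β (-(β * K k))
  set g : ℝ → ℝ := fun y => (1 / u0) * u (β * y + -(β * K k)) with hgdef
  have hsg : ∀ y, sn k y = g y := by
    apply ode2_unique (-(1 + k^2)) (2 * k^2) (sn k) g hsnC hgC
    · intro x; have := hsnODE x; linarith
    · intro y
      have h2y := congrFun hg2 y
      set z : ℝ := β * y + -(β * K k) with hz
      have hgz : g y = (1/u0) * u z := rfl
      rw [h2y, hdd z, hgz]
      have hinv : (1/u0) * u0 = 1 := one_div_mul_cancel hu0ne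
      linear_combination (-(1/u0) * u z) * hc1 + (-((1/u0)^3) * (u z)^3) * hc2' +
        ((1/u0) * (u z)^3 * b * β^2 * ((1/u0)*u0 + 1)) * hinv
    · rw [hsnK]
      show (1:ℝ) = (1 / u0) * u (β * (K k) + -(β * K k))
      have h0 : β * (K k) + -(β * K k) = 0 := by ring
      rw [h0, ← hu0def]
      field_simp
    · rw [hsnK']
      have h1' := congrFun hg1 (K k)
      have h0 : β * (K k) + -(β * K k) = 0 := by ring
      rw [h0, hder0] at h1'
      rw [h1']; ring
  -- the main existence and uniqueness statement
  refine ⟨(1 / u0, β, k), ⟨by positivity, hβpos, ⟨hkpos, hklt⟩, by simpa using hc2, ?_⟩, ?_⟩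
  · intro x
    have := hsg (K k + x / β)
    rw [hgdef] at this
    simp only at this
    have hβne : β ≠ 0 := ne_of_gt hβpos
    have harg : β * (K k + x / β) + -(β * K k) = x := by
      field_simp
      ring
    rw [harg] at this
    show u x = (1 / (1 / u0)) * sn k (K k + x / β)
    rw [this, one_div_one_div]
    field_simp
  · rintro ⟨α', β', k'⟩ ⟨hα', hβ', hk', hcon', heq'⟩
    simp only at hα' hβ' hk' hcon' heq'
    obtain ⟨hC', hODE', hKv', hKd'⟩ := hsn k' hk'.1 hk'.2
    have hα'ne : α' ≠ 0 := ne_of_gt hα'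
    have hβ'ne : β' ≠ 0 := ne_of_gt hβ'
    -- α' u0 = 1
    have hα'u0 : α' * u0 = 1 := by
      have h0 := heq' 0
      rw [zero_div, add_zero, hKv', mul_one] at h0
      rw [← hu0def] at h0
      field_simp at h0
      linarith
    have hα'eq : α' = 1 / u0 := by
      field_simp
      linarith [hα'u0]
    -- express u via the affine composition to compute second derivative at 0
    obtain ⟨hhC, hh1, hh2⟩ := affine_comp (sn k') hC' (1 / α') (1 / β') (K k')
    have hueq : u = fun x => (1 / α') * sn k' ((1 / β') * x + K k') := by
      funext x
      rw [heq' x]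
      congr 1
      rw [div_eq_inv_mul, inv_eq_one_div]
      ring
    have hdd0 : deriv (deriv u) 0 = (1 / α') * (1 / β') ^ 2 * deriv (deriv (sn k')) (K k') := by
      rw [hueq, hh2]
      norm_num
    -- second derivative of sn k' at K k'
    have hsn'' : deriv (deriv (sn k')) (K k') = -(1 + k'^2) + 2 * k'^2 := by
      have h := hODE' (K k')
      rw [hKv'] at h
      norm_num at h
      linarith
    -- equation at x = 0, cleared of denominators
    have hmain' : α' * β'^2 * (-a * u0 + -b * u0 ^ 3) = -(1 + k'^2) + 2 * k'^2 := by
      have h1 := hdd 0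
      rw [← hu0def, hdd0, hsn''] at h1
      field_simp at h1
      linear_combination -h1
    -- multiply by u0 and use α' u0 = 1
    have hmain2 : β'^2 * (a * u0 + b * u0^3) = (1 - k'^2) * u0 := by
      linear_combination (-u0) * hmain' + (-(β'^2 * (a * u0 + b * u0^3))) * hα'u0
    -- constraint without denominators
    have hcon2' : b * β'^2 * u0^2 = -(2 * k'^2) := by
      linear_combination u0^2 * hcon' + (-(2 * k'^2)) * (α' * u0 + 1) * hα'u0
    -- solve for β'²
    have hβ'D : β'^2 * D * u0 = 1 * u0 := by
      rw [hDdef, habsb]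
      linear_combination hmain2 + (-u0/2) * hcon2'
    have hβ'sq : β' ^ 2 = 1 / D := by
      have h := mul_right_cancel₀ hu0ne hβ'D
      exact eq_one_div_of_mul_eq_one_left h
    have hk'sq : k' ^ 2 = |b| * u0 ^ 2 / (2 * D) := by
      rw [hβ'sq] at hcon2'
      rw [habsb]
      field_simp at hcon2' ⊢
      linarith
    have hβ'eq : β' = β := by
      rw [hβdef, ← hβ'sq, Real.sqrt_sq hβ'.le]
    have hk'eq : k' = k := by
      rw [hkdef, ← hk'sq, Real.sqrt_sq hk'.1.le]
    rw [hα'eq, hβ'eq, hk'eq]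
end

section
/- Fix T > 0, a ∈ ℝ, b > 0, and let u be a non-constant real T-periodic C² solution of u'' + a u + b u³ = 0 with u(0) = max u > 0 and min u < 0. Then b·u(0)² > max(0, −2a), and there exist unique α > 0, β > 0, k ∈ (0,1) satisfying b β² = 2k² α² such that u(x) = (1/α) cn(x/β, k). -/
open Set

/-- `deriv` of a `C²` function is `C¹`. -/
private lemma cd1 {f : ℝ → ℝ} (h : ContDiff ℝ 2 f) : ContDiff ℝ 1 (deriv f) := by
  rw [← one_add_one_eq_two, contDiff_succ_iff_deriv] at h
  exact h.2.2

/-- Energy conservation for `u'' + a u + b u³ = 0`. -/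
private lemma aux_energy (a b : ℝ) (u : ℝ → ℝ) (hu : ContDiff ℝ 2 u)
    (hode : ∀ x, deriv (deriv u) x + a * u x + b * (u x)^3 = 0) (x y : ℝ) :
    (deriv u x)^2 + a * (u x)^2 + b/2 * (u x)^4
      = (deriv u y)^2 + a * (u y)^2 + b/2 * (u y)^4 := by
  set E : ℝ → ℝ := fun t => (deriv u t)^2 + a * (u t)^2 + b/2 * (u t)^4 with hE
  have hud : Differentiable ℝ u := hu.differentiable (by norm_num)
  have hud' : Differentiable ℝ (deriv u) := (cd1 hu).differentiable one_ne_zero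
  have key : ∀ t, HasDerivAt E 0 t := by
    intro t
    have h1 : HasDerivAt u (deriv u t) t := (hud t).hasDerivAt
    have h2 : HasDerivAt (deriv u) (deriv (deriv u) t) t := (hud' t).hasDerivAt
    have h3 := ((h2.pow 2).add ((h1.pow 2).const_mul a)).add ((h1.pow 4).const_mul (b/2))
    refine h3.congr_deriv ?_
    have h4 := hode t
    push_cast
    linear_combination (2 * deriv u t) * h4
  exact is_const_of_deriv_eq_zero (fun t => (key t).differentiableAt)
    (fun t => (key t).deriv) x y

/-- Uniqueness for the second-order ODE `y'' = -(a y + b y³)` among bounded solutions. -/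
private lemma aux_unique (a b R : ℝ) (f g : ℝ → ℝ) (hf : ContDiff ℝ 2 f) (hg : ContDiff ℝ 2 g)
    (hfode : ∀ x, deriv (deriv f) x = -(a * f x + b * (f x)^3))
    (hgode : ∀ x, deriv (deriv g) x = -(a * g x + b * (g x)^3))
    (hfR : ∀ x, |f x| ≤ R) (hgR : ∀ x, |g x| ≤ R)
    (t₀ : ℝ) (h0 : f t₀ = g t₀) (h1 : deriv f t₀ = deriv g t₀) : ∀ x, f x = g x := by
  set v : ℝ → ℝ × ℝ → ℝ × ℝ := fun _ y => (y.2, -(a * y.1 + b * y.1^3)) with hv_def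
  set s : ℝ → Set (ℝ × ℝ) := fun _ => {y : ℝ × ℝ | |y.1| ≤ R} with hs_def
  set Kr : ℝ := max 1 (|a| + 3 * |b| * R^2) with hKr
  have hKr0 : 0 ≤ Kr := le_trans zero_le_one (le_max_left _ _)
  set K : NNReal := Real.toNNReal Kr with hK
  have hKcoe : (K : ℝ) = Kr := Real.coe_toNNReal _ hKr0
  have hv : ∀ t, LipschitzOnWith K (v t) (s t) := by
    intro t
    rw [lipschitzOnWith_iff_dist_le_mul]
    intro y hy z hz
    simp only [hs_def, mem_setOf_eq] at hy hz
    rw [hKcoe]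
    have hyz : dist (v t y) (v t z)
        = max (dist y.2 z.2) (dist (-(a * y.1 + b * y.1^3)) (-(a * z.1 + b * z.1^3))) := by
      simp [hv_def, Prod.dist_eq]
    rw [hyz, Prod.dist_eq]
    have hcube : dist (-(a * y.1 + b * y.1^3)) (-(a * z.1 + b * z.1^3))
        ≤ (|a| + 3 * |b| * R^2) * |y.1 - z.1| := by
      rw [Real.dist_eq]
      have e : -(a * y.1 + b * y.1^3) - -(a * z.1 + b * z.1^3)
          = a * (z.1 - y.1) + b * ((z.1 - y.1) * (z.1^2 + z.1 * y.1 + y.1^2)) := by ring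
      rw [e]
      have h3R : |z.1^2 + z.1 * y.1 + y.1^2| ≤ 3 * R^2 := by
        have hy1 := abs_le.mp hy
        have hz1 := abs_le.mp hz
        rw [abs_le]
        constructor <;> nlinarith [sq_nonneg (z.1 + y.1), sq_nonneg (z.1 - y.1)]
      calc |a * (z.1 - y.1) + b * ((z.1 - y.1) * (z.1^2 + z.1 * y.1 + y.1^2))|
          ≤ |a * (z.1 - y.1)| + |b * ((z.1 - y.1) * (z.1^2 + z.1 * y.1 + y.1^2))| :=
            abs_add_le _ _
        _ = |a| * |z.1 - y.1| + |b| * (|z.1 - y.1| * |z.1^2 + z.1 * y.1 + y.1^2|) := by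
            rw [abs_mul, abs_mul, abs_mul]
        _ ≤ |a| * |z.1 - y.1| + |b| * (|z.1 - y.1| * (3 * R^2)) := by
            have := abs_nonneg (z.1 - y.1)
            gcongr
        _ = (|a| + 3 * |b| * R^2) * |y.1 - z.1| := by
            rw [abs_sub_comm z.1 y.1]; ring
    have hd1 : dist y z = max (dist y.1 z.1) (dist y.2 z.2) := Prod.dist_eq
    have hdn : (0:ℝ) ≤ dist y z := dist_nonneg
    apply max_le
    · calc dist y.2 z.2 ≤ dist y z := by rw [hd1]; exact le_max_right _ _
        _ = 1 * dist y z := (one_mul _).symm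
        _ ≤ Kr * dist y z := by
            apply mul_le_mul_of_nonneg_right (le_max_left _ _) hdn
    · calc dist (-(a * y.1 + b * y.1^3)) (-(a * z.1 + b * z.1^3))
          ≤ (|a| + 3 * |b| * R^2) * |y.1 - z.1| := hcube
        _ ≤ Kr * dist y z := by
            apply mul_le_mul (le_max_right _ _) _ (abs_nonneg _) hKr0
            rw [hd1, ← Real.dist_eq]
            exact le_max_left _ _
  -- package as first-order system
  set F : ℝ → ℝ × ℝ := fun t => (f t, deriv f t) with hF_def
  set G : ℝ → ℝ × ℝ := fun t => (g t, deriv g t) with hG_def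
  have hfd : Differentiable ℝ f := hf.differentiable (by norm_num)
  have hfd' : Differentiable ℝ (deriv f) := (cd1 hf).differentiable one_ne_zero
  have hgd : Differentiable ℝ g := hg.differentiable (by norm_num)
  have hgd' : Differentiable ℝ (deriv g) := (cd1 hg).differentiable one_ne_zero
  have hF : ∀ t, HasDerivAt F (v t (F t)) t := by
    intro t
    have h1 : HasDerivAt f (deriv f t) t := (hfd t).hasDerivAt
    have h2 : HasDerivAt (deriv f) (deriv (deriv f) t) t := (hfd' t).hasDerivAt
    rw [hfode t] at h2
    exact h1.prodMk h2
  have hG : ∀ t, HasDerivAt G (v t (G t)) t := by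
    intro t
    have h1 : HasDerivAt g (deriv g t) t := (hgd t).hasDerivAt
    have h2 : HasDerivAt (deriv g) (deriv (deriv g) t) t := (hgd' t).hasDerivAt
    rw [hgode t] at h2
    exact h1.prodMk h2
  intro x
  set M : ℝ := |x - t₀| + 1 with hM
  have hM0 : 0 < M := by positivity
  have ht₀ : t₀ ∈ Ioo (t₀ - M) (t₀ + M) := by constructor <;> nlinarith
  have hx : x ∈ Ioo (t₀ - M) (t₀ + M) := by
    have h5 := abs_le.mp (le_refl |x - t₀|)
    constructor <;> nlinarith [abs_nonneg (x - t₀)]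
  have heq : EqOn F G (Ioo (t₀ - M) (t₀ + M)) :=
    ODE_solution_unique_of_mem_Ioo (fun t _ => hv t) ht₀
      (fun t _ => ⟨hF t, hfR t⟩) (fun t _ => ⟨hG t, hgR t⟩)
      (by simp [hF_def, hG_def, h0, h1])
  exact congrArg Prod.fst (heq hx)

private lemma aux_cnbound (q c d : ℝ) (hq0 : 0 < q) (hq1 : q < 1)
    (hEc : d^2 + (1 - 2*q)*c^2 + 2*q/2*c^4 = 0^2 + (1-2*q)*1^2 + 2*q/2*1^4) :
    q * c^2 ≤ 2 := by
  nlinarith [hEc, sq_nonneg d, sq_nonneg c, hq0, hq1,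
    mul_nonneg (sq_nonneg c) (sub_nonneg.mpr hq1.le)]

/-- Derivatives of a scaled solution. -/
private lemma aux_scaled (w : ℝ → ℝ) (hw : ContDiff ℝ 2 w) (A B c β : ℝ) (hc : c ≠ 0)
    (hβ : β ≠ 0)
    (hwode : ∀ y, deriv (deriv w) y + A * w y + B * (w y)^3 = 0) :
    ContDiff ℝ 2 (fun x => c * w (x/β)) ∧
    deriv (fun x => c * w (x/β)) = (fun x => (c/β) * deriv w (x/β)) ∧
    ∀ x, deriv (deriv (fun x => c * w (x/β))) x
      = -((A/β^2) * (c * w (x/β)) + (B/(c^2*β^2)) * (c * w (x/β))^3) := by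
  have hwd : Differentiable ℝ w := hw.differentiable (by norm_num)
  have hwd' : Differentiable ℝ (deriv w) := (cd1 hw).differentiable one_ne_zero
  have h1 : ∀ x : ℝ, HasDerivAt (fun x : ℝ => c * w (x/β)) ((c/β) * deriv w (x/β)) x := by
    intro x
    have ha : HasDerivAt (fun x : ℝ => x/β) (1/β) x := (hasDerivAt_id x).div_const β
    have hb : HasDerivAt w (deriv w (x/β)) (x/β) := (hwd _).hasDerivAt
    have h2 := (hb.comp x ha).const_mul c
    refine h2.congr_deriv ?_
    ring
  have hcd : ContDiff ℝ 2 (fun x => c * w (x/β)) := by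
    have h2 : ContDiff ℝ 2 (fun x : ℝ => x/β) := by
      simpa using (contDiff_id (𝕜 := ℝ) (E := ℝ)).div_const β
    exact (hw.comp h2).const_smul c
  have hderiv : deriv (fun x => c * w (x/β)) = (fun x => (c/β) * deriv w (x/β)) :=
    funext fun x => (h1 x).deriv
  refine ⟨hcd, hderiv, fun x => ?_⟩
  have h2 : HasDerivAt (fun x : ℝ => (c/β) * deriv w (x/β))
      ((c/β^2) * deriv (deriv w) (x/β)) x := by
    have ha : HasDerivAt (fun x : ℝ => x/β) (1/β) x := (hasDerivAt_id x).div_const β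
    have hb : HasDerivAt (deriv w) (deriv (deriv w) (x/β)) (x/β) := (hwd' _).hasDerivAt
    have h3 := (hb.comp x ha).const_mul (c/β)
    refine h3.congr_deriv ?_
    ring
  rw [hderiv, h2.deriv]
  have h3 := hwode (x/β)
  field_simp
  linear_combination h3

set_option maxHeartbeats 2000000 in
/-- Classification of sign-changing real periodic waves, focusing case:
any such solution of `u'' + a u + b u³ = 0` (with `b > 0`) is a rescaled
cnoidal function. Here `cn k` denotes the Jacobi elliptic cosine of modulus
`k`, characterized as the solution of `v'' + (1−2k²)v + 2k²v³ = 0` with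
`v(0) = 1`, `v'(0) = 0`. -/
theorem stmt_7 (T a b : ℝ) (hT : 0 < T) (hb : 0 < b)
    (cn : ℝ → ℝ → ℝ)
    (hcn : ∀ k, 0 < k → k < 1 →
      ContDiff ℝ 2 (cn k) ∧
      (∀ x, deriv (deriv (cn k)) x + (1 - 2 * k^2) * cn k x + 2 * k^2 * (cn k x)^3 = 0) ∧
      cn k 0 = 1 ∧ deriv (cn k) 0 = 0)
    (u : ℝ → ℝ) (hu : ContDiff ℝ 2 u)
    (hper : ∀ x, u (x + T) = u x)
    (hnc : ¬ ∃ c : ℝ, ∀ x, u x = c)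
    (hode : ∀ x, deriv (deriv u) x + a * u x + b * (u x)^3 = 0)
    (hmax : ∀ x, u x ≤ u 0) (hpos : 0 < u 0) (hneg : ∃ x, u x < 0) :
    max 0 (-(2 * a)) < b * (u 0)^2 ∧
    ∃! p : ℝ × ℝ × ℝ,
      0 < p.1 ∧ 0 < p.2.1 ∧ p.2.2 ∈ Set.Ioo (0:ℝ) 1 ∧
      b * p.2.1^2 = 2 * p.2.2^2 * p.1^2 ∧
      ∀ x, u x = (1 / p.1) * cn p.2.2 (x / p.2.1) := by
  have hu0ne : u 0 ≠ 0 := ne_of_gt hpos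
  -- derivative vanishes at the max
  have hderiv0 : deriv u 0 = 0 := by
    have h : IsLocalMax u 0 := Filter.Eventually.of_forall hmax
    exact h.deriv_eq_zero
  -- global bound on u from periodicity
  obtain ⟨Ru, hRu⟩ : ∃ R, ∀ x, |u x| ≤ R := by
    obtain ⟨z, hz1, hz2⟩ := isCompact_Icc.exists_isMaxOn
      (⟨0, le_refl 0, hT.le⟩ : (Set.Icc (0:ℝ) T).Nonempty)
      ((continuous_abs.comp hu.continuous).continuousOn)
    refine ⟨|u z|, fun x => ?_⟩
    have hperiodic : Function.Periodic u T := hper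
    obtain ⟨y, hy, hxy⟩ := hperiodic.exists_mem_Ico₀ hT x
    rw [hxy]
    exact hz2 (Ico_subset_Icc_self hy)
  -- energy conservation
  have hE := aux_energy a b u hu hode
  -- u has a zero
  obtain ⟨x₁, hx₁⟩ := hneg
  obtain ⟨x₀, _, hx₀⟩ : ∃ x₀, x₀ ∈ uIcc 0 x₁ ∧ u x₀ = 0 := by
    have hsub : (0:ℝ) ∈ uIcc (u 0) (u x₁) := by
      rw [Set.mem_uIcc]
      right
      exact ⟨hx₁.le, hpos.le⟩
    obtain ⟨x₀, hx₀1, hx₀2⟩ := intermediate_value_uIcc hu.continuous.continuousOn hsub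
    exact ⟨x₀, hx₀1, hx₀2⟩
  -- derivative at zero point is nonzero (else u ≡ 0)
  have hderivx₀ : deriv u x₀ ≠ 0 := by
    intro hzero
    have hz : ∀ x, u x = (fun _ : ℝ => (0:ℝ)) x := by
      apply aux_unique a b (max Ru 0) u (fun _ => 0) hu contDiff_const
        (fun x => by linarith [hode x]) (fun x => by simp)
        (fun x => le_trans (hRu x) (le_max_left _ _))
        (fun x => by simp) x₀ (by simpa using hx₀)
      simp [hzero]
    have h0 := hz 0
    simp at h0
    exact hu0ne h0
  -- positivity of the energy
  have hC : 0 < a * (u 0)^2 + b/2 * (u 0)^4 := by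
    have h1 := hE x₀ 0
    rw [hx₀, hderiv0] at h1
    have h2 : (0:ℝ) < (deriv u x₀)^2 := by positivity
    nlinarith [h1, h2]
  have hfirst : max 0 (-(2 * a)) < b * (u 0)^2 := by
    rw [max_lt_iff]
    constructor
    · positivity
    · nlinarith [hC, pow_pos hpos 2]
  obtain ⟨hf1, hf2⟩ := max_lt_iff.mp hfirst
  have hden : 0 < a + b * (u 0)^2 := by linarith
  refine ⟨hfirst, ?_⟩
  -- the parameters
  obtain ⟨α, hα_def⟩ : ∃ α : ℝ, α = 1 / u 0 := ⟨_, rfl⟩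
  obtain ⟨k, hk_def⟩ : ∃ k : ℝ, k = Real.sqrt (b * (u 0)^2 / (2 * (a + b * (u 0)^2))) :=
    ⟨_, rfl⟩
  obtain ⟨β, hβ_def⟩ : ∃ β : ℝ, β = Real.sqrt (1 / (a + b * (u 0)^2)) := ⟨_, rfl⟩
  have hk2 : k^2 = b * (u 0)^2 / (2 * (a + b * (u 0)^2)) := by
    rw [hk_def]; exact Real.sq_sqrt (by positivity)
  have hβ2 : β^2 = 1 / (a + b * (u 0)^2) := by
    rw [hβ_def]; exact Real.sq_sqrt (by positivity)
  have hαpos : 0 < α := by rw [hα_def]; positivity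
  have hkpos : 0 < k := by rw [hk_def]; exact Real.sqrt_pos.mpr (by positivity)
  have hβpos : 0 < β := by rw [hβ_def]; exact Real.sqrt_pos.mpr (by positivity)
  have hk1 : k < 1 := by
    have h1 : k^2 < 1 := by
      rw [hk2, div_lt_one (by positivity)]
      linarith
    nlinarith [hkpos]
  have hβne : β ≠ 0 := ne_of_gt hβpos
  have hdenne : a + b * (u 0)^2 ≠ 0 := ne_of_gt hden
  -- the two structural identities
  have hconsβ : b * β^2 = 2 * k^2 * α^2 := by
    rw [hβ2, hk2, hα_def]
    field_simp
  have haβ : a * β^2 = 1 - 2 * k^2 := by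
    rw [hβ2, hk2]
    field_simp
    ring
  obtain ⟨hcnC, hcnODE, hcn0, hcn'0⟩ := hcn k hkpos hk1
  -- bound on cn k
  have hcnbd : ∀ y, |cn k y| ≤ Real.sqrt (2 / k^2) := by
    intro y
    have hEc := aux_energy (1 - 2 * k^2) (2 * k^2) (cn k) hcnC hcnODE y 0
    rw [hcn0, hcn'0] at hEc
    have hq1 : k^2 < 1 := by nlinarith [hkpos, hk1]
    have hck2 : k^2 * (cn k y)^2 ≤ 2 :=
      aux_cnbound (k^2) (cn k y) (deriv (cn k) y) (by positivity) hq1 hEc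
    rw [← Real.sqrt_sq_eq_abs]
    apply Real.sqrt_le_sqrt
    rw [le_div_iff₀ (by positivity : (0:ℝ) < k^2)]
    linarith [hck2]
  -- the candidate function
  obtain ⟨hvC, hvderiv, hvode⟩ :=
    aux_scaled (cn k) hcnC (1 - 2 * k^2) (2 * k^2) (u 0) β hu0ne hβne hcnODE
  obtain ⟨v, hv_def⟩ : ∃ v : ℝ → ℝ, v = fun x => u 0 * cn k (x/β) := ⟨_, rfl⟩
  rw [← hv_def] at hvC hvderiv hvode
  have hA : (1 - 2 * k^2)/β^2 = a := by
    rw [← haβ]; field_simp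
  have hB : (2 * k^2)/((u 0)^2 * β^2) = b := by
    rw [div_eq_iff (by positivity : ((u 0)^2 * β^2) ≠ 0)]
    have h1 : (2:ℝ) * k^2 * α^2 * (u 0)^2 = 2 * k^2 := by
      rw [hα_def]; field_simp
    linear_combination (-((u 0)^2) : ℝ) * hconsβ - h1
  have hvode' : ∀ x, deriv (deriv v) x = -(a * v x + b * (v x)^3) := by
    intro x
    rw [hvode x, hA, hB]
    simp only [hv_def]
  have hvx : ∀ x, v x = u 0 * cn k (x/β) := fun x => by rw [hv_def]
  have hvbd : ∀ x, |v x| ≤ u 0 * Real.sqrt (2 / k^2) := by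
    intro x
    rw [hvx x, abs_mul, abs_of_pos hpos]
    exact mul_le_mul_of_nonneg_left (hcnbd _) hpos.le
  have h00 : u 0 = v 0 := by rw [hvx 0, zero_div, hcn0, mul_one]
  have h11 : deriv u 0 = deriv v 0 := by
    rw [hderiv0, hvderiv]
    simp [zero_div, hcn'0]
  have hueq : ∀ x, u x = v x :=
    aux_unique a b (max Ru (u 0 * Real.sqrt (2 / k^2))) u v hu hvC
      (fun x => by linarith [hode x]) hvode'
      (fun x => le_trans (hRu x) (le_max_left _ _))
      (fun x => le_trans (hvbd x) (le_max_right _ _)) 0 h00 h11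
  refine ⟨(α, β, k), ⟨hαpos, hβpos, ⟨hkpos, hk1⟩, hconsβ, fun x => ?_⟩, ?_⟩
  · rw [hueq x]
    simp only [hv_def, hα_def]
    rw [one_div_one_div]
  -- uniqueness
  rintro ⟨α', β', k'⟩ ⟨hα', hβ', ⟨hk'0, hk'1⟩, hcons', hrepr⟩
  dsimp only at hα' hβ' hk'0 hk'1 hcons' hrepr
  obtain ⟨hcnC', hcnODE', hcn0', hcn'0'⟩ := hcn k' hk'0 hk'1
  have hβ'ne : β' ≠ 0 := ne_of_gt hβ'
  have hα'ne : α' ≠ 0 := ne_of_gt hα'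
  -- α' = 1/u0
  have hα'val : α' = 1 / u 0 := by
    have h1 := hrepr 0
    rw [zero_div, hcn0'] at h1
    field_simp at h1 ⊢
    linear_combination h1
  have hcne : (1:ℝ)/α' ≠ 0 := one_div_ne_zero hα'ne
  obtain ⟨_, _, hvode2⟩ :=
    aux_scaled (cn k') hcnC' (1 - 2 * k'^2) (2 * k'^2) (1/α') β' hcne hβ'ne hcnODE'
  have huf : u = (fun x => (1/α') * cn k' (x/β')) := funext hrepr
  have hode2 : ∀ x, deriv (deriv u) x
      = -(((1 - 2 * k'^2)/β'^2) * u x + ((2 * k'^2)/((1/α')^2 * β'^2)) * (u x)^3) := by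
    intro x
    conv_lhs => rw [huf]
    rw [hvode2 x]
    rw [huf]
  have hBmatch : (2 * k'^2)/((1/α')^2 * β'^2) = b := by
    rw [div_eq_iff (mul_ne_zero (pow_ne_zero 2 hcne) (pow_ne_zero 2 hβ'ne))]
    field_simp
    linarith [hcons']
  have hlin : ∀ x, (a - (1 - 2 * k'^2)/β'^2) * u x = 0 := by
    intro x
    have h1 := hode x
    have h2 := hode2 x
    rw [hBmatch] at h2
    linear_combination h1 - h2
  have hAval : (1 - 2 * k'^2) = a * β'^2 := by
    have h1 := hlin 0
    rcases mul_eq_zero.mp h1 with h | h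
    · have h5 : (1 - 2 * k'^2)/β'^2 = a := by linarith
      rw [div_eq_iff (pow_ne_zero 2 hβ'ne)] at h5
      linarith [h5]
    · exact absurd h hu0ne
  -- now solve for k' and β'
  have h2 : b * β'^2 * (u 0)^2 = 2 * k'^2 := by
    rw [hcons', hα'val]
    field_simp
  have h1 : a * β'^2 = 1 - 2 * k'^2 := hAval.symm
  have hk'2 : k'^2 = k^2 := by
    rw [hk2, eq_div_iff (by positivity : (2:ℝ) * (a + b * (u 0)^2) ≠ 0)]
    linear_combination (b * (u 0)^2) * h1 - a * h2
  have hkk : k' = k := by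
    have hmm : (k' - k) * (k' + k) = 0 := by linear_combination hk'2
    rcases mul_eq_zero.mp hmm with h | h
    · linarith
    · linarith
  have hββ : β' = β := by
    have e1 : b * β'^2 = 2 * k^2 * (1 / u 0)^2 := by
      rw [hcons', hkk, hα'val]
    have e2 : b * β^2 = 2 * k^2 * (1 / u 0)^2 := by
      rw [hconsβ, hα_def]
    have h3 : β'^2 = β^2 := mul_left_cancel₀ (ne_of_gt hb) (e1.trans e2.symm)
    have h4 : (β' - β) * (β' + β) = 0 := by linear_combination h3
    rcases mul_eq_zero.mp h4 with h | h
    · linarith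
    · linarith
  have hαα : α' = α := by rw [hα'val, hα_def]
  simp [Prod.ext_iff, hαα, hββ, hkk]
end

section
/- Let v be a T-anti-periodic function of class H¹_loc on ℝ (so its Fourier series on [0,2T] contains only odd frequency indices j, with coefficients v_j). Define ṽ by Fourier coefficients ṽ_j = √((|v_j|² + |v_{−j}|²)/2). Then ṽ is real-valued, ‖ṽ‖_{L²} = ‖v‖_{L²}, ‖∂_x ṽ‖_{L²} = ‖∂_x v‖_{L²}, and ‖ṽ‖_{L⁴} ≥ ‖v‖_{L⁴} (all norms over one period of length 2T). -/
open Real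

open MeasureTheory


noncomputable section
namespace FR

def e (T : ℝ) (j : ℤ) (x : ℝ) : ℂ := Complex.exp (Complex.I * j * π * x / T)

lemma e_eq (T : ℝ) (j : ℤ) (x : ℝ) :
    e T j x = Complex.exp (((j * π * x / T : ℝ) : ℂ) * Complex.I) := by
  unfold e; push_cast; ring_nf

lemma norm_e (T : ℝ) (j : ℤ) (x : ℝ) : ‖e T j x‖ = 1 := by
  rw [e_eq]; exact Complex.norm_exp_ofReal_mul_I _

lemma star_e (T : ℝ) (j : ℤ) (x : ℝ) : star (e T j x) = e T (-j) x := by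
  rw [e_eq, e_eq]
  show (starRingEnd ℂ) _ = _
  rw [← Complex.exp_conj]
  congr 1
  simp [Complex.conj_ofReal, Complex.conj_I]
  ring

lemma e_mul (T : ℝ) (j k : ℤ) (x : ℝ) : e T j x * e T k x = e T (j + k) x := by
  unfold e; rw [← Complex.exp_add]; congr 1; push_cast; ring

lemma e_zero (T : ℝ) (x : ℝ) : e T 0 x = 1 := by
  unfold e; simp

lemma abs_e (T : ℝ) (j : ℤ) (x : ℝ) : ‖e T j x‖ = 1 := norm_e T j x

lemma continuous_e (T : ℝ) (j : ℤ) : Continuous (fun x => e T j x) := by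
  unfold e; fun_prop

lemma integral_e {T : ℝ} (hT : 0 < T) (m : ℤ) :
    ∫ x in (0:ℝ)..(2*T), e T m x = if m = 0 then ((2*T : ℝ) : ℂ) else 0 := by
  split_ifs with h
  · subst h
    simp [e_zero, intervalIntegral.integral_const]
  · have hT' : (T : ℂ) ≠ 0 := by exact_mod_cast (ne_of_gt hT)
    have hc : (Complex.I * m * π / T) ≠ 0 := by
      have hm : (m : ℂ) ≠ 0 := by exact_mod_cast h
      have hpi : (π : ℂ) ≠ 0 := by exact_mod_cast Real.pi_ne_zero
      exact div_ne_zero (mul_ne_zero (mul_ne_zero Complex.I_ne_zero hm) hpi) hT'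
    have : ∀ x : ℝ, e T m x = Complex.exp ((Complex.I * m * π / T) * x) := by
      intro x; unfold e; ring_nf
    rw [intervalIntegral.integral_congr (fun x _ => this x)]
    rw [integral_exp_mul_complex hc]
    have h2 : (Complex.I * m * π / T) * ((2*T : ℝ) : ℂ) = m * (2 * π * Complex.I) := by
      field_simp
      push_cast
      ring
    rw [h2, Complex.exp_int_mul_two_pi_mul_I]
    simp

lemma summable_norm_term {T : ℝ} (a : ℤ → ℂ) (ha : Summable fun j => ‖a j‖) (x : ℝ) :
    Summable fun j => ‖a j * e T j x‖ := by
  refine ha.congr fun j => ?_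
  simp [norm_e, abs_e]

lemma summable_F {T : ℝ} (a : ℤ → ℂ) (ha : Summable fun j => ‖a j‖) (x : ℝ) :
    Summable fun p : ℤ × ℤ => ‖a p.1 * star (a p.2) * e T (p.1 - p.2) x‖ := by
  refine (ha.mul_of_nonneg ha (fun j => norm_nonneg _) (fun j => norm_nonneg _)).congr
    fun p => ?_
  simp [norm_e, abs_e, norm_star]

lemma prod_expand {T : ℝ} (a : ℤ → ℂ) (ha : Summable fun j => ‖a j‖) (x : ℝ) :
    (∑' j, a j * e T j x) * star (∑' j, a j * e T j x)
      = ∑' p : ℤ × ℤ, a p.1 * star (a p.2) * e T (p.1 - p.2) x := by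
  rw [tsum_star]
  have h1 : Summable fun j => ‖a j * e T j x‖ := summable_norm_term a ha x
  have h2 : Summable fun j => ‖star (a j * e T j x)‖ := by simpa [norm_star] using h1
  rw [tsum_mul_tsum_of_summable_norm h1 h2]
  exact tsum_congr fun p => by
    rw [star_mul', star_e, mul_mul_mul_comm, e_mul, ← sub_eq_add_neg]

lemma parseval {T : ℝ} (hT : 0 < T) (a : ℤ → ℂ) (ha : Summable fun j => ‖a j‖) :
    (∫ x in (0:ℝ)..(2*T), ‖∑' j, a j * e T j x‖^2) = 2*T * ∑' j, ‖a j‖^2 := by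
  have hT2 : (0:ℝ) ≤ 2*T := by linarith
  set F : ℤ × ℤ → ℝ → ℂ := fun p x => a p.1 * star (a p.2) * e T (p.1 - p.2) x with hF
  have hFs : ∀ x, Summable fun p => ‖F p x‖ := summable_F a ha
  have hcont : ∀ p : ℤ × ℤ, Continuous (F p) := fun p =>
    continuous_const.mul (continuous_e T _)
  have hFint : ∀ p : ℤ × ℤ, IntegrableOn (F p) (Set.Ioc 0 (2*T)) :=
    fun p => (hcont p).integrableOn_Ioc
  -- pointwise identity
  have hpt : ∀ x, ‖∑' j, a j * e T j x‖^2 = ∑' p : ℤ × ℤ, (F p x).re := by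
    intro x
    rw [← Complex.re_tsum (hFs x).of_norm, ← prod_expand a ha x, Complex.star_def,
      Complex.mul_conj, Complex.ofReal_re, Complex.normSq_eq_norm_sq]
  rw [intervalIntegral.integral_of_le hT2]
  rw [setIntegral_congr_fun measurableSet_Ioc (fun x _ => hpt x)]
  have hintre : ∀ p : ℤ × ℤ, IntegrableOn (fun x => (F p x).re) (Set.Ioc 0 (2*T)) :=
    fun p => (Complex.continuous_re.comp (hcont p)).integrableOn_Ioc
  have hbound : ∀ p : ℤ × ℤ, (∫ x in Set.Ioc (0:ℝ) (2*T), ‖(F p x).re‖)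
      ≤ 2*T * (‖a p.1‖ * ‖a p.2‖) := by
    intro p
    have h1 : ∀ x, ‖(F p x).re‖ ≤ ‖a p.1‖ * ‖a p.2‖ := by
      intro x
      refine (Complex.abs_re_le_norm _).trans ?_
      simp [hF, norm_e, abs_e, norm_star]
    calc (∫ x in Set.Ioc (0:ℝ) (2*T), ‖(F p x).re‖)
        ≤ ∫ _x in Set.Ioc (0:ℝ) (2*T), (‖a p.1‖ * ‖a p.2‖) := by
          refine integral_mono (hintre p).norm (integrableOn_const ?_) (fun x => h1 x)
          rw [Real.volume_Ioc]
          exact ENNReal.ofReal_ne_top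
      _ = 2*T * (‖a p.1‖ * ‖a p.2‖) := by
          rw [setIntegral_const, measureReal_def, Real.volume_Ioc, smul_eq_mul]
          rw [ENNReal.toReal_ofReal (by linarith)]
          ring
  have hsumint : Summable fun p : ℤ × ℤ => ∫ x in Set.Ioc (0:ℝ) (2*T), ‖(F p x).re‖ := by
    refine Summable.of_nonneg_of_le (fun p => integral_nonneg fun x => norm_nonneg _)
      hbound ?_
    exact ((ha.mul_of_nonneg ha (fun j => norm_nonneg _) (fun j => norm_nonneg _)).mul_left _)
  rw [← MeasureTheory.integral_tsum_of_summable_integral_norm hintre (by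
    refine hsumint.congr fun p => ?_
    rfl)]
  -- now compute each integral
  have hI : ∀ p : ℤ × ℤ, (∫ x in Set.Ioc (0:ℝ) (2*T), (F p x).re)
      = if p.2 = p.1 then 2*T * ‖a p.1‖^2 else 0 := by
    intro p
    simp only [← RCLike.re_to_complex]
    rw [integral_re (hFint p)]
    simp only [RCLike.re_to_complex]
    have : (∫ x in Set.Ioc (0:ℝ) (2*T), F p x)
        = a p.1 * star (a p.2) * (if p.1 - p.2 = 0 then ((2*T:ℝ):ℂ) else 0) := by
      rw [hF]
      simp only []
      rw [MeasureTheory.integral_const_mul, ← intervalIntegral.integral_of_le hT2,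
        integral_e hT]
    rw [this]
    rcases eq_or_ne p.2 p.1 with h | h
    · rw [if_pos h, if_pos (by rw [h]; ring)]
      rw [h, Complex.star_def, Complex.mul_conj]
      rw [← Complex.ofReal_mul, Complex.ofReal_re, Complex.normSq_eq_norm_sq]
      ring
    · rw [if_neg h, if_neg (fun hc => h (sub_eq_zero.mp hc).symm), mul_zero,
        Complex.zero_re]
  rw [tsum_congr hI]
  have hsum2 : Summable fun p : ℤ × ℤ => if p.2 = p.1 then 2*T * ‖a p.1‖^2 else 0 := by
    refine Summable.of_nonneg_of_le (fun p => by positivity) (fun p => ?_)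
      ((ha.mul_of_nonneg ha (fun j => norm_nonneg _) (fun j => norm_nonneg _)).mul_left (2*T))
    rcases eq_or_ne p.2 p.1 with h | h
    · rw [if_pos h, h, sq]
    · rw [if_neg h]; positivity
  rw [Summable.tsum_prod' hsum2 (fun j => hsum2.prod_factor j)]
  calc ∑' (j : ℤ), ∑' (k : ℤ), (if k = j then 2*T * ‖a j‖^2 else 0)
      = ∑' (j : ℤ), 2*T * ‖a j‖^2 := tsum_congr fun j => tsum_ite_eq j _
    _ = 2*T * ∑' j, ‖a j‖^2 := tsum_mul_left


lemma sq_summable {f : ℤ → ℝ} (h : Summable f) (h0 : ∀ n, 0 ≤ f n) :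
    Summable fun n => (f n)^2 := by
  refine Summable.of_norm_bounded_eventually (g := f) h ?_
  filter_upwards [h.tendsto_cofinite_zero.eventually (eventually_le_nhds one_pos)] with n hn
  have h1 := h0 n
  rw [Real.norm_eq_abs, abs_of_nonneg (by positivity)]
  nlinarith

def φ : ℤ × ℤ ≃ ℤ × ℤ where
  toFun p := (p.1 + p.2, p.2)
  invFun p := (p.1 - p.2, p.2)
  left_inv p := by simp
  right_inv p := by simp

lemma summable_shift {g : ℤ → ℝ} (hg : Summable g) (h0 : ∀ j, 0 ≤ g j) :
    Summable fun p : ℤ × ℤ => g (p.1 + p.2) * g p.2 :=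
  φ.summable_iff.2 (hg.mul_of_nonneg hg h0 h0)

lemma cs_aux {A A' B B' : ℝ} (hA : 0 ≤ A) (hA' : 0 ≤ A') (hB : 0 ≤ B) (hB' : 0 ≤ B') :
    (A*B + A'*B')/2 ≤ Real.sqrt ((A^2+A'^2)/2) * Real.sqrt ((B^2+B'^2)/2) := by
  rw [← Real.sqrt_mul (by positivity)]
  rw [Real.le_sqrt (by positivity) (by positivity)]
  nlinarith [sq_nonneg (A*B' - A'*B)]

lemma sym_tsum {c : ℤ → ℂ} {w : ℤ → ℝ} (hw : ∀ j, w (-j) = w j)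
    (h1 : Summable fun j => ‖c j‖^2 * w j) :
    ∑' j : ℤ, ((‖c j‖^2 + ‖c (-j)‖^2)/2) * w j = ∑' j : ℤ, ‖c j‖^2 * w j := by
  have h2 : Summable fun j : ℤ => ‖c (-j)‖^2 * w j := by
    refine ((Equiv.neg ℤ).summable_iff.2 h1).congr fun j => ?_
    show ‖c (-j)‖^2 * w (-j) = _
    rw [hw]
  have h3 : ∑' j : ℤ, ‖c (-j)‖^2 * w j = ∑' j : ℤ, ‖c j‖^2 * w j := by
    rw [← (Equiv.neg ℤ).tsum_eq (fun j : ℤ => ‖c j‖^2 * w j)]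
    refine tsum_congr fun j => ?_
    show ‖c (-j)‖^2 * w j = ‖c (-j)‖^2 * w (-j)
    rw [hw]
  calc ∑' j : ℤ, ((‖c j‖^2 + ‖c (-j)‖^2)/2) * w j
      = ∑' j : ℤ, (‖c j‖^2 * w j + ‖c (-j)‖^2 * w j)/2 := tsum_congr fun j => by ring
    _ = (∑' j : ℤ, (‖c j‖^2 * w j + ‖c (-j)‖^2 * w j))/2 := tsum_div_const
    _ = ((∑' j : ℤ, ‖c j‖^2 * w j) + ∑' j : ℤ, ‖c (-j)‖^2 * w j)/2 := by
        rw [Summable.tsum_add h1 h2]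
    _ = ∑' j : ℤ, ‖c j‖^2 * w j := by rw [h3]; ring

def bb (a : ℤ → ℂ) (n : ℤ) : ℂ := ∑' k, a (n + k) * star (a k)

lemma summable_bfiber {a : ℤ → ℂ} (ha : Summable fun j => ‖a j‖) (n : ℤ) :
    Summable fun k => ‖a (n + k) * star (a k)‖ := by
  refine ((summable_shift ha (fun j => norm_nonneg _)).prod_factor n).congr fun k => ?_
  simp [norm_star]

lemma norm_bb_le {a : ℤ → ℂ} (ha : Summable fun j => ‖a j‖) (n : ℤ) :
    ‖bb a n‖ ≤ ∑' k, ‖a (n + k)‖ * ‖a k‖ := by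
  refine (norm_tsum_le_tsum_norm (summable_bfiber ha n)).trans_eq ?_
  exact tsum_congr fun k => by simp [norm_star]

lemma summable_norm_bb {a : ℤ → ℂ} (ha : Summable fun j => ‖a j‖) :
    Summable fun n => ‖bb a n‖ := by
  have hG := summable_shift ha (fun j => norm_nonneg _)
  have hB : Summable fun n => ∑' k, ‖a (n + k)‖ * ‖a k‖ :=
    ((summable_prod_of_nonneg (fun p => by positivity)).1 hG).2
  exact Summable.of_nonneg_of_le (fun n => norm_nonneg _) (fun n => norm_bb_le ha n) hB

lemma sq_expand {T : ℝ} (a : ℤ → ℂ) (ha : Summable fun j => ‖a j‖) (x : ℝ) :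
    (∑' j, a j * e T j x) * star (∑' j, a j * e T j x) = ∑' n, bb a n * e T n x := by
  rw [prod_expand a ha x,
    ← φ.tsum_eq (fun p : ℤ × ℤ => a p.1 * star (a p.2) * e T (p.1 - p.2) x)]
  have hs : Summable fun p : ℤ × ℤ => a (p.1 + p.2) * star (a p.2) * e T p.1 x := by
    apply Summable.of_norm
    refine (summable_shift ha (fun j => norm_nonneg _)).congr fun p => ?_
    simp [norm_e, abs_e, norm_star]
  calc (∑' p : ℤ × ℤ, a ((φ p).1) * star (a ((φ p).2)) * e T ((φ p).1 - (φ p).2) x)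
      = ∑' p : ℤ × ℤ, a (p.1 + p.2) * star (a p.2) * e T p.1 x := by
        refine tsum_congr fun p => ?_
        simp [φ]
    _ = ∑' n, ∑' k, a (n + k) * star (a k) * e T n x :=
        Summable.tsum_prod' hs fun n => hs.prod_factor n
    _ = ∑' n, bb a n * e T n x := by
        refine tsum_congr fun n => ?_
        simp only [bb]
        rw [← tsum_mul_right]

lemma l4 {T : ℝ} (hT : 0 < T) (a : ℤ → ℂ) (ha : Summable fun j => ‖a j‖) :
    (∫ x in (0:ℝ)..(2*T), ‖∑' j, a j * e T j x‖^4) = 2*T * ∑' n, ‖bb a n‖^2 := by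
  rw [← parseval hT (bb a) (summable_norm_bb ha)]
  refine intervalIntegral.integral_congr fun x _ => ?_
  rw [← sq_expand a ha x, norm_mul, norm_star]
  ring

lemma hasDerivAt_e (T : ℝ) (j : ℤ) (x : ℝ) :
    HasDerivAt (fun y : ℝ => e T j y) (e T j x * (Complex.I * j * π / T)) x := by
  have heq : (fun y : ℝ => e T j y) = fun y : ℝ => Complex.exp ((Complex.I * j * π / T) * y) := by
    funext y; unfold e; ring_nf
  rw [heq]
  have h1 : HasDerivAt (fun y : ℝ => (Complex.I * j * π / T) * (y:ℂ)) (Complex.I * j * π / T) x := by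
    simpa only [mul_one, id_eq, Complex.ofReal_one] using
      ((hasDerivAt_id x).ofReal_comp).const_mul (Complex.I * (j:ℂ) * (π:ℂ) / (T:ℂ))
  have h2 := h1.cexp
  convert h2 using 1
  unfold e; ring_nf

lemma norm_d {T : ℝ} (hT : 0 < T) (j : ℤ) :
    ‖Complex.I * j * π / T‖ = |(j:ℝ)| * π / T := by
  simp only [norm_div, norm_mul, Complex.norm_I, Complex.norm_intCast,
    Complex.norm_real, Real.norm_eq_abs, abs_of_pos hT, abs_of_nonneg Real.pi_pos.le, one_mul]

set_option maxHeartbeats 1000000 in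
lemma deriv_tsum (T : ℝ) (hT : 0 < T) (a : ℤ → ℂ)
    (hsum : Summable fun j : ℤ => (1 + |(j:ℝ)|) * ‖a j‖) (x : ℝ) :
    HasDerivAt (fun y => ∑' j, a j * e T j y)
      (∑' j, (a j * (Complex.I * j * π / T)) * e T j x) x := by
  have ha : Summable fun j => ‖a j‖ := by
    refine Summable.of_nonneg_of_le (fun j => norm_nonneg _) (fun j => ?_) hsum
    refine le_mul_of_one_le_left (norm_nonneg _) ?_
    have := abs_nonneg ((j:ℝ)); linarith
  refine hasDerivAt_tsum (u := fun j : ℤ => (π/T) * ((1 + |(j:ℝ)|) * ‖a j‖))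
    (g := fun j y => a j * e T j y)
    (g' := fun (j : ℤ) (y : ℝ) => (a j * (Complex.I * j * π / T)) * e T j y)
    (y₀ := 0)
    (hsum.mul_left _) (fun j y => ?_) (fun j y => ?_)
    ((summable_norm_term a ha 0).of_norm) x
  · have h := (hasDerivAt_e T j y).const_mul (a j)
    rw [show a j * (e T j y * (Complex.I * j * π / T))
        = (a j * (Complex.I * j * π / T)) * e T j y by ring] at h
    exact h
  · rw [norm_mul, norm_mul, norm_e, mul_one, norm_d hT j]
    have hp : 0 < π/T := div_pos Real.pi_pos hT
    have h1 : |(j:ℝ)| * π / T ≤ (π/T) * (1 + |(j:ℝ)|) := by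
      have := abs_nonneg ((j:ℝ))
      rw [mul_div_assoc, mul_comm]
      nlinarith
    calc ‖a j‖ * (|(j:ℝ)| * π / T) ≤ ‖a j‖ * ((π/T) * (1 + |(j:ℝ)|)) :=
          mul_le_mul_of_nonneg_left h1 (norm_nonneg _)
      _ = (π/T) * ((1 + |(j:ℝ)|) * ‖a j‖) := by ring

end FR


set_option maxHeartbeats 4000000 in
open FR in
/-- Fourier rearrangement for anti-periodic functions: given a `T`-anti-periodic
function `v` with (absolutely and `H¹`-summable) Fourier coefficients `c j`
supported on odd indices, the function `ṽ` with real coefficients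
`√((|c_j|² + |c_{−j}|²)/2)` is real-valued, has the same `L²` norm and the same
`L²` norm of the derivative, and at least as large an `L⁴` norm, over one
period of length `2T`. -/
theorem stmt_8 (T : ℝ) (hT : 0 < T) (c : ℤ → ℂ)
    (hodd : ∀ j : ℤ, Even j → c j = 0)
    (hsum : Summable fun j : ℤ => (1 + |(j : ℝ)|) * ‖c j‖)
    (v vt : ℝ → ℂ)
    (hv : ∀ x : ℝ, v x = ∑' j : ℤ, c j * Complex.exp (Complex.I * j * π * x / T))
    (hanti : ∀ x : ℝ, v (x + T) = -v x)
    (hvt : ∀ x : ℝ, vt x = ∑' j : ℤ,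
      ((Real.sqrt ((‖c j‖^2 + ‖c (-j)‖^2) / 2) : ℝ) : ℂ) *
        Complex.exp (Complex.I * j * π * x / T)) :
    (∀ x : ℝ, (vt x).im = 0) ∧
    (∫ x in (0:ℝ)..(2*T), ‖vt x‖^2) = (∫ x in (0:ℝ)..(2*T), ‖v x‖^2) ∧
    (∫ x in (0:ℝ)..(2*T), ‖deriv vt x‖^2) = (∫ x in (0:ℝ)..(2*T), ‖deriv v x‖^2) ∧
    (∫ x in (0:ℝ)..(2*T), ‖v x‖^4) ≤ (∫ x in (0:ℝ)..(2*T), ‖vt x‖^4) := by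
  classical
  set r : ℤ → ℝ := fun j => Real.sqrt ((‖c j‖^2 + ‖c (-j)‖^2) / 2) with hrdef
  set a' : ℤ → ℂ := fun j => ((r j : ℝ) : ℂ) with ha'def
  have he : ∀ (j : ℤ) (x : ℝ), e T j x = Complex.exp (Complex.I * j * π * x / T) :=
    fun j x => rfl
  have hv' : ∀ x : ℝ, v x = ∑' j : ℤ, c j * e T j x := fun x => by
    rw [hv x]; exact tsum_congr fun j => by rw [he]
  have hvt' : ∀ x : ℝ, vt x = ∑' j : ℤ, a' j * e T j x := fun x => by
    rw [hvt x]; exact tsum_congr fun j => by rw [he]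
  have hr0 : ∀ j, 0 ≤ r j := fun j => Real.sqrt_nonneg _
  have hrsymm : ∀ j, r (-j) = r j := fun j => by
    simp only [hrdef, neg_neg]
    rw [add_comm]
  have hna' : ∀ j, ‖a' j‖ = r j := fun j => by
    simp [ha'def, Complex.norm_real, abs_of_nonneg (hr0 j)]
  have hsumc : Summable fun j : ℤ => ‖c j‖ := by
    refine Summable.of_nonneg_of_le (fun j => norm_nonneg _) (fun j => ?_) hsum
    refine le_mul_of_one_le_left (norm_nonneg _) ?_
    have := abs_nonneg ((j:ℝ)); linarith
  have hsumcneg : Summable fun j : ℤ => ‖c (-j)‖ := (Equiv.neg ℤ).summable_iff.2 hsumc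
  have hrle : ∀ j, r j ≤ ‖c j‖ + ‖c (-j)‖ := by
    intro j
    rw [hrdef]
    rw [show ‖c j‖ + ‖c (-j)‖ = Real.sqrt ((‖c j‖ + ‖c (-j)‖)^2) from
      (Real.sqrt_sq (by positivity)).symm]
    apply Real.sqrt_le_sqrt
    nlinarith [norm_nonneg (c j), norm_nonneg (c (-j))]
  have hsumr : Summable r := Summable.of_nonneg_of_le hr0 hrle (hsumc.add hsumcneg)
  have hsuma' : Summable fun j : ℤ => ‖a' j‖ := hsumr.congr fun j => (hna' j).symm
  have hrsq : ∀ j, r j ^ 2 = (‖c j‖^2 + ‖c (-j)‖^2)/2 := fun j =>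
    Real.sq_sqrt (by positivity)
  -- Part 1: real-valued
  have part1 : ∀ x : ℝ, (vt x).im = 0 := by
    intro x
    rw [← Complex.conj_eq_iff_im, hvt' x]
    calc (starRingEnd ℂ) (∑' j : ℤ, a' j * e T j x)
        = ∑' j : ℤ, a' j * e T (-j) x := by
          rw [← Complex.star_def, tsum_star]
          refine tsum_congr fun j => ?_
          rw [star_mul', star_e]
          congr 1
          simp [ha'def, Complex.star_def, Complex.conj_ofReal]
      _ = ∑' j : ℤ, a' j * e T j x := by
          rw [← (Equiv.neg ℤ).tsum_eq (fun j : ℤ => a' j * e T j x)]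
          refine tsum_congr fun j => ?_
          show a' j * e T (-j) x = a' (-j) * e T (-j) x
          congr 1
          simp only [ha'def]
          rw [hrsymm]
  -- Part 2: L2 norms
  have hL2vt : (∫ x in (0:ℝ)..(2*T), ‖vt x‖^2) = 2*T * ∑' j : ℤ, ‖a' j‖^2 := by
    rw [← parseval hT a' hsuma']
    exact intervalIntegral.integral_congr fun x _ => by rw [hvt' x]
  have hL2v : (∫ x in (0:ℝ)..(2*T), ‖v x‖^2) = 2*T * ∑' j : ℤ, ‖c j‖^2 := by
    rw [← parseval hT c hsumc]
    exact intervalIntegral.integral_congr fun x _ => by rw [hv' x]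
  have hsumc2 : Summable fun j : ℤ => ‖c j‖^2 :=
    sq_summable hsumc fun _ => norm_nonneg _
  have part2 : (∫ x in (0:ℝ)..(2*T), ‖vt x‖^2) = (∫ x in (0:ℝ)..(2*T), ‖v x‖^2) := by
    rw [hL2vt, hL2v]
    congr 1
    calc ∑' j : ℤ, ‖a' j‖^2
        = ∑' j : ℤ, ((‖c j‖^2 + ‖c (-j)‖^2)/2) * 1 := by
          refine tsum_congr fun j => ?_
          rw [hna', hrsq]; ring
      _ = ∑' j : ℤ, ‖c j‖^2 * 1 :=
          sym_tsum (fun j => rfl) (hsumc2.congr fun j => (mul_one _).symm)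
      _ = ∑' j : ℤ, ‖c j‖^2 := tsum_congr fun j => mul_one _
  -- Part 3: derivatives
  have hsuma'1 : Summable fun j : ℤ => (1 + |(j : ℝ)|) * ‖a' j‖ := by
    have hsumneg : Summable fun j : ℤ => (1 + |(j : ℝ)|) * ‖c (-j)‖ := by
      refine ((Equiv.neg ℤ).summable_iff.2 hsum).congr fun j => ?_
      show (1 + |((-j : ℤ) : ℝ)|) * ‖c (-j)‖ = _
      push_cast
      rw [abs_neg]
    refine Summable.of_nonneg_of_le (fun j => by positivity) (fun j => ?_)
      (hsum.add hsumneg)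
    rw [hna']
    calc (1 + |(j : ℝ)|) * r j ≤ (1 + |(j : ℝ)|) * (‖c j‖ + ‖c (-j)‖) :=
          mul_le_mul_of_nonneg_left (hrle j) (by positivity)
      _ = (1 + |(j : ℝ)|) * ‖c j‖ + (1 + |(j : ℝ)|) * ‖c (-j)‖ := by ring
  have hderv : ∀ x : ℝ, deriv v x = ∑' j : ℤ, (c j * (Complex.I * j * π / T)) * e T j x := by
    intro x
    rw [funext hv']
    exact (deriv_tsum T hT c hsum x).deriv
  have hdervt : ∀ x : ℝ, deriv vt x = ∑' j : ℤ, (a' j * (Complex.I * j * π / T)) * e T j x := by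
    intro x
    rw [funext hvt']
    exact (deriv_tsum T hT a' hsuma'1 x).deriv
  have hsumcd : Summable fun j : ℤ => ‖c j * (Complex.I * j * π / T)‖ := by
    refine Summable.of_nonneg_of_le (fun j => norm_nonneg _) (fun j => ?_)
      (hsum.mul_left (π/T))
    rw [norm_mul, norm_d hT j]
    have hp : 0 < π/T := div_pos Real.pi_pos hT
    have := abs_nonneg ((j:ℝ))
    have := norm_nonneg (c j)
    rw [mul_div_assoc]
    nlinarith
  have hsuma'd : Summable fun j : ℤ => ‖a' j * (Complex.I * j * π / T)‖ := by
    refine Summable.of_nonneg_of_le (fun j => norm_nonneg _) (fun j => ?_)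
      (hsuma'1.mul_left (π/T))
    rw [norm_mul, norm_d hT j]
    have hp : 0 < π/T := div_pos Real.pi_pos hT
    have := abs_nonneg ((j:ℝ))
    have := norm_nonneg (a' j)
    rw [mul_div_assoc]
    nlinarith
  have hDv : (∫ x in (0:ℝ)..(2*T), ‖deriv v x‖^2)
      = 2*T * ∑' j : ℤ, ‖c j * (Complex.I * j * π / T)‖^2 := by
    rw [← parseval hT _ hsumcd]
    exact intervalIntegral.integral_congr fun x _ => by rw [hderv x]
  have hDvt : (∫ x in (0:ℝ)..(2*T), ‖deriv vt x‖^2)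
      = 2*T * ∑' j : ℤ, ‖a' j * (Complex.I * j * π / T)‖^2 := by
    rw [← parseval hT _ hsuma'd]
    exact intervalIntegral.integral_congr fun x _ => by rw [hdervt x]
  have hwsym : ∀ j : ℤ, ‖Complex.I * ((-j : ℤ) : ℂ) * π / T‖^2 = ‖Complex.I * (j : ℂ) * π / T‖^2 := by
    intro j
    rw [norm_d hT, norm_d hT]
    push_cast
    rw [abs_neg]
  have hsumcw : Summable fun j : ℤ => ‖c j‖^2 * ‖Complex.I * (j:ℂ) * π / T‖^2 := by
    refine (sq_summable hsumcd fun j => norm_nonneg _).congr fun j => ?_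
    rw [norm_mul]; ring
  have part3 : (∫ x in (0:ℝ)..(2*T), ‖deriv vt x‖^2)
      = (∫ x in (0:ℝ)..(2*T), ‖deriv v x‖^2) := by
    rw [hDv, hDvt]
    congr 1
    calc ∑' j : ℤ, ‖a' j * (Complex.I * j * π / T)‖^2
        = ∑' j : ℤ, ((‖c j‖^2 + ‖c (-j)‖^2)/2) * ‖Complex.I * (j:ℂ) * π / T‖^2 := by
          refine tsum_congr fun j => ?_
          rw [norm_mul, mul_pow, hna', hrsq]
      _ = ∑' j : ℤ, ‖c j‖^2 * ‖Complex.I * (j:ℂ) * π / T‖^2 :=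
          sym_tsum hwsym hsumcw
      _ = ∑' j : ℤ, ‖c j * (Complex.I * j * π / T)‖^2 := by
          refine tsum_congr fun j => ?_
          rw [norm_mul, mul_pow]
  -- Part 4: L4 inequality
  have h4v : (∫ x in (0:ℝ)..(2*T), ‖v x‖^4) = 2*T * ∑' n : ℤ, ‖bb c n‖^2 := by
    rw [← l4 hT c hsumc]
    exact intervalIntegral.integral_congr fun x _ => by rw [hv' x]
  have h4vt : (∫ x in (0:ℝ)..(2*T), ‖vt x‖^4) = 2*T * ∑' n : ℤ, ‖bb a' n‖^2 := by
    rw [← l4 hT a' hsuma']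
    exact intervalIntegral.integral_congr fun x _ => by rw [hvt' x]
  have key : ∀ n : ℤ, ‖bb c n‖ ≤ ‖bb a' n‖ := by
    intro n
    have hrfiber : Summable fun k : ℤ => r (n+k) * r k :=
      (summable_shift hsumr hr0).prod_factor n
    have hbt : bb a' n = ((∑' k : ℤ, r (n+k) * r k : ℝ) : ℂ) := by
      simp only [bb]
      rw [Complex.ofReal_tsum]
      refine tsum_congr fun k => ?_
      simp only [ha'def, Complex.star_def, Complex.conj_ofReal, Complex.ofReal_mul]
    have hRHS : ‖bb a' n‖ = ∑' k : ℤ, r (n+k) * r k := by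
      rw [hbt]
      rw [Complex.norm_real, Real.norm_eq_abs]
      exact abs_of_nonneg (tsum_nonneg fun k => mul_nonneg (hr0 _) (hr0 _))
    have h1 : ‖bb c n‖ ≤ ∑' k : ℤ, ‖c (n+k)‖ * ‖c k‖ := norm_bb_le hsumc n
    have hSsum : Summable fun k : ℤ => ‖c (n+k)‖ * ‖c k‖ :=
      (summable_shift hsumc fun j => norm_nonneg _).prod_factor n
    have hψ : Function.Involutive (fun k : ℤ => -n-k) := fun k => by ring
    have hSneg_sum : Summable fun k : ℤ => ‖c (-k)‖ * ‖c (-(n+k))‖ := by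
      refine ((Function.Involutive.toPerm _ hψ).summable_iff.2 hSsum).congr fun k => ?_
      show ‖c (n + (-n-k))‖ * ‖c (-n-k)‖ = _
      rw [show n + (-n-k) = -k by ring, show -n-k = -(n+k) by ring]
    have hSneg : ∑' k : ℤ, ‖c (n+k)‖ * ‖c k‖ = ∑' k : ℤ, ‖c (-k)‖ * ‖c (-(n+k))‖ := by
      rw [← (Function.Involutive.toPerm _ hψ).tsum_eq (fun k : ℤ => ‖c (n+k)‖ * ‖c k‖)]
      refine tsum_congr fun k => ?_
      show ‖c (n + (-n-k))‖ * ‖c (-n-k)‖ = _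
      rw [show n + (-n-k) = -k by ring, show -n-k = -(n+k) by ring]
    have h2 : ∑' k : ℤ, ‖c (n+k)‖ * ‖c k‖ ≤ ∑' k : ℤ, r (n+k) * r k := by
      have hhalf : ∑' k : ℤ, ‖c (n+k)‖ * ‖c k‖
          = ∑' k : ℤ, (‖c (n+k)‖ * ‖c k‖ + ‖c (-k)‖ * ‖c (-(n+k))‖)/2 := by
        calc ∑' k : ℤ, ‖c (n+k)‖ * ‖c k‖
            = ((∑' k : ℤ, ‖c (n+k)‖ * ‖c k‖) + ∑' k : ℤ, ‖c (-k)‖ * ‖c (-(n+k))‖)/2 := by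
              rw [← hSneg]; ring
          _ = (∑' k : ℤ, (‖c (n+k)‖ * ‖c k‖ + ‖c (-k)‖ * ‖c (-(n+k))‖))/2 := by
              rw [Summable.tsum_add hSsum hSneg_sum]
          _ = ∑' k : ℤ, (‖c (n+k)‖ * ‖c k‖ + ‖c (-k)‖ * ‖c (-(n+k))‖)/2 :=
              tsum_div_const.symm
      rw [hhalf]
      refine Summable.tsum_le_tsum (fun k => ?_) ((hSsum.add hSneg_sum).div_const 2) hrfiber
      have hcs := cs_aux (norm_nonneg (c (n+k))) (norm_nonneg (c (-(n+k))))
        (norm_nonneg (c k)) (norm_nonneg (c (-k)))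
      calc (‖c (n+k)‖ * ‖c k‖ + ‖c (-k)‖ * ‖c (-(n+k))‖)/2
          = (‖c (n+k)‖ * ‖c k‖ + ‖c (-(n+k))‖ * ‖c (-k)‖)/2 := by ring
        _ ≤ Real.sqrt ((‖c (n+k)‖^2 + ‖c (-(n+k))‖^2)/2)
            * Real.sqrt ((‖c k‖^2 + ‖c (-k)‖^2)/2) := hcs
        _ = r (n+k) * r k := rfl
    rw [hRHS]
    exact h1.trans h2
  have part4 : (∫ x in (0:ℝ)..(2*T), ‖v x‖^4) ≤ (∫ x in (0:ℝ)..(2*T), ‖vt x‖^4) := by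
    rw [h4v, h4vt]
    refine mul_le_mul_of_nonneg_left ?_ (by linarith)
    refine Summable.tsum_le_tsum (fun n => ?_)
      (sq_summable (summable_norm_bb hsumc) fun n => norm_nonneg _)
      (sq_summable (summable_norm_bb hsuma') fun n => norm_nonneg _)
    exact pow_le_pow_left₀ (norm_nonneg _) (key n) 2
  exact ⟨part1, part2, part3, part4⟩
end
end

section
/- Let L be a real symmetric (self-adjoint) operator on a complex Hilbert space that commutes with conjugation, and let J be the block operator with J(f₁,f₂) = (f₂, −f₁) and 𝓛 = diag(L₊, L₋) with L₊, L₋ self-adjoint. If (f₁,f₂) and (g₁,g₂) are eigenvectors of J𝓛 = [[0, L₋],[−L₊, 0]] with eigenvalues λ and μ respectively, and λ + μ̄ ≠ 0, then ⟨f, Jg⟩ = ⟨f, 𝓛g⟩ = 0. If additionally λ − μ̄ ≠ 0, then ⟨f₁, g₂⟩ = ⟨f₂, g₁⟩ = 0. -/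
/-- Symplectic orthogonality of eigenfunctions of `J𝓛 = [[0, L₋],[−L₊, 0]]`:
if `f = (f₁,f₂)` and `g = (g₁,g₂)` are eigenvectors with eigenvalues `λ`, `μ`
and `λ + μ̄ ≠ 0`, then `⟨f, Jg⟩ = ⟨f, 𝓛g⟩ = 0`; if moreover `λ − μ̄ ≠ 0`,
then `⟨f₁, g₂⟩ = ⟨f₂, g₁⟩ = 0`. -/
theorem stmt_12 {H : Type*} [NormedAddCommGroup H] [InnerProductSpace ℂ H]
    (Lp Lm : H →ₗ[ℂ] H)
    (hLp : ∀ x y : H, (inner ℂ (Lp x) y : ℂ) = inner ℂ x (Lp y))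
    (hLm : ∀ x y : H, (inner ℂ (Lm x) y : ℂ) = inner ℂ x (Lm y))
    (f₁ f₂ g₁ g₂ : H) (lam mu : ℂ)
    (hf1 : Lm f₂ = lam • f₁) (hf2 : -(Lp f₁) = lam • f₂)
    (hg1 : Lm g₂ = mu • g₁) (hg2 : -(Lp g₁) = mu • g₂) :
    (lam + (starRingEnd ℂ) mu ≠ 0 →
      ((inner ℂ f₁ g₂ : ℂ) - (inner ℂ f₂ g₁ : ℂ) = 0 ∧
       (inner ℂ f₁ (Lp g₁) : ℂ) + (inner ℂ f₂ (Lm g₂) : ℂ) = 0)) ∧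
    (lam + (starRingEnd ℂ) mu ≠ 0 → lam - (starRingEnd ℂ) mu ≠ 0 →
      ((inner ℂ f₁ g₂ : ℂ) = 0 ∧ (inner ℂ f₂ g₁ : ℂ) = 0)) := by
  have hLpf : Lp f₁ = -(lam • f₂) := by
    rw [← hf2, neg_neg]
  have hLpg : Lp g₁ = -(mu • g₂) := by
    rw [← hg2, neg_neg]
  set a : ℂ := inner ℂ f₁ g₂ with ha
  set b : ℂ := inner ℂ f₂ g₁ with hb
  have e1 : (starRingEnd ℂ) lam * b = mu * a := by
    have := hLp f₁ g₁
    rw [hLpf, hLpg] at this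
    simpa [inner_smul_left, inner_smul_right, ← ha, ← hb] using this
  have e2 : (starRingEnd ℂ) lam * a = mu * b := by
    have := hLm f₂ g₂
    rw [hf1, hg1] at this
    simpa [inner_smul_left, inner_smul_right, ← ha, ← hb, mul_comm] using this
  have hdiff : lam + (starRingEnd ℂ) mu ≠ 0 → a - b = 0 := by
    intro hp
    have hp' : (starRingEnd ℂ) lam + mu ≠ 0 := by
      intro h
      apply hp
      have := congrArg (starRingEnd ℂ) h
      simpa using this
    have hz : ((starRingEnd ℂ) lam + mu) * (a - b) = 0 := by
      linear_combination e2 - e1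
    rcases mul_eq_zero.mp hz with h | h
    · exact absurd h hp'
    · exact h
  constructor
  · intro hp
    have hab := hdiff hp
    refine ⟨hab, ?_⟩
    have hL : (inner ℂ f₁ (Lp g₁) : ℂ) + (inner ℂ f₂ (Lm g₂) : ℂ) = -mu * (a - b) := by
      rw [hLpg, hg1]
      simp [inner_smul_right, ← ha, ← hb]
      ring
    rw [hL, hab, mul_zero]
  · intro hp hm
    have hab := hdiff hp
    have hm' : (starRingEnd ℂ) lam - mu ≠ 0 := by
      intro h
      apply hm
      have := congrArg (starRingEnd ℂ) h
      simpa using this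
    have hz : ((starRingEnd ℂ) lam - mu) * (a + b) = 0 := by
      linear_combination e2 + e1
    have hsum : a + b = 0 := by
      rcases mul_eq_zero.mp hz with h | h
      · exact absurd h hm'
      · exact h
    constructor
    · linear_combination (hab + hsum) / 2
    · linear_combination (hsum - hab) / 2
end

section
/- (Coercivity lemma, part 1) Let L₊, L₋ be self-adjoint operators on a Hilbert space S with J𝓛 = [[0,L₋],[−L₊,0]]. Suppose J𝓛 ξ = iγ ξ for some real γ ≠ 0 and ξ = (ξ₁, ξ₂) with ⟨ξ₁, L₊ξ₁⟩ + ⟨ξ₂, L₋ξ₂⟩ < 0. Suppose moreover L₊ f = −λ f with λ > 0 and L₊ restricted to {f}⊥ is strictly positive. Then L₊ restricted to {ξ₂}⊥ is strictly positive: ⟨h, L₊ h⟩ > 0 for all nonzero h ⊥ ξ₂. -/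
open Complex in
lemma auxCS_14 {H : Type*} [NormedAddCommGroup H] [InnerProductSpace ℂ H]
    (Lp : H →ₗ[ℂ] H)
    (hLp : ∀ x y : H, (inner ℂ (Lp x) y : ℂ) = inner ℂ x (Lp y))
    (g : H)
    (pos : ∀ z : H, (inner ℂ g z : ℂ) = 0 → 0 ≤ ((inner ℂ z (Lp z) : ℂ)).re)
    (x y : H) (hx : (inner ℂ g x : ℂ) = 0) (hy : (inner ℂ g y : ℂ) = 0)
    (hd : 0 < ((inner ℂ y (Lp y) : ℂ)).re) :
    Complex.normSq (inner ℂ x (Lp y)) ≤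
      ((inner ℂ x (Lp x) : ℂ)).re * ((inner ℂ y (Lp y) : ℂ)).re := by
  set u : ℂ := inner ℂ y (Lp x) with hu
  set d : ℝ := ((inner ℂ y (Lp y) : ℂ)).re with hdd
  have hdne : d ≠ 0 := ne_of_gt hd
  have hsym : ∀ a b : H, (starRingEnd ℂ) (inner ℂ a (Lp b) : ℂ) = inner ℂ b (Lp a) := by
    intro a b
    rw [← hLp b a, inner_conj_symm]
  have hyy : (inner ℂ y (Lp y) : ℂ) = (d : ℝ) := by
    have := hsym y y
    have him : (inner ℂ y (Lp y) : ℂ).im = 0 := by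
      have h2 := congrArg Complex.im this
      rw [Complex.conj_im] at h2
      linarith
    exact Complex.ext rfl him
  have hconj : (inner ℂ x (Lp y) : ℂ) = (starRingEnd ℂ) u := (hsym y x).symm
  set t : ℂ := u / (d : ℂ) with ht
  set z : H := x - t • y with hz
  have hgz : (inner ℂ g z : ℂ) = 0 := by
    simp [hz, inner_sub_right, inner_smul_right, hx, hy]
  have hzz : (inner ℂ z (Lp z) : ℂ) = inner ℂ x (Lp x) - (Complex.normSq u / d : ℝ) := by
    have hdc : ((d : ℝ) : ℂ) ≠ 0 := by exact_mod_cast hdne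
    simp only [hz, map_sub, map_smul, inner_sub_left, inner_sub_right,
      inner_smul_left, inner_smul_right, hconj, hyy, ← hu]
    rw [ht]
    push_cast
    rw [map_div₀, Complex.conj_ofReal]
    field_simp
    ring_nf
    rw [mul_comm ((starRingEnd ℂ) u) u, Complex.mul_conj]
  have h0 := pos z hgz
  rw [hzz] at h0
  simp only [Complex.sub_re, Complex.ofReal_re] at h0
  have : Complex.normSq u / d ≤ ((inner ℂ x (Lp x) : ℂ)).re := by linarith
  have h2 : Complex.normSq u ≤ ((inner ℂ x (Lp x) : ℂ)).re * d := by
    rw [div_le_iff₀ hd] at this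
    linarith [this]
  calc Complex.normSq (inner ℂ x (Lp y)) = Complex.normSq u := by rw [hconj]; simp [Complex.normSq_conj]
    _ ≤ _ := h2

set_option maxHeartbeats 1600000 in
/-- Coercivity lemma, part 1: if `J𝓛 = [[0,L₋],[−L₊,0]]` has an eigenvector
`ξ = (ξ₁,ξ₂)` with purely imaginary nonzero eigenvalue `iγ` and negative
linearized energy, and `L₊` has a one-dimensional negative subspace spanned
by `f` (with `L₊ > 0` on `{f}⊥`), then `L₊ > 0` on `{ξ₂}⊥`. -/
theorem stmt_14 {H : Type*} [NormedAddCommGroup H] [InnerProductSpace ℂ H]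
    (Lp Lm : H →ₗ[ℂ] H)
    (hLp : ∀ x y : H, (inner ℂ (Lp x) y : ℂ) = inner ℂ x (Lp y))
    (hLm : ∀ x y : H, (inner ℂ (Lm x) y : ℂ) = inner ℂ x (Lm y))
    (γ : ℝ) (hγ : γ ≠ 0) (ξ₁ ξ₂ : H)
    (hξ1 : Lm ξ₂ = (Complex.I * γ) • ξ₁)
    (hξ2 : -(Lp ξ₁) = (Complex.I * γ) • ξ₂)
    (hneg : ((inner ℂ ξ₁ (Lp ξ₁) : ℂ) + (inner ℂ ξ₂ (Lm ξ₂) : ℂ)).re < 0)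
    (f : H) (hf0 : f ≠ 0) (lam : ℝ) (hlam : 0 < lam)
    (hf : Lp f = (-(lam : ℂ)) • f)
    (hfpos : ∀ h : H, (inner ℂ f h : ℂ) = 0 → h ≠ 0 → 0 < ((inner ℂ h (Lp h) : ℂ)).re) :
    ∀ h : H, (inner ℂ ξ₂ h : ℂ) = 0 → h ≠ 0 → 0 < ((inner ℂ h (Lp h) : ℂ)).re := by
  intro h hperp hne
  -- normalized eigenvector g
  set g : H := ((‖f‖ : ℂ))⁻¹ • f with hg
  have hfn : (‖f‖ : ℝ) ≠ 0 := by simpa using hf0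
  have hfnC : ((‖f‖ : ℝ) : ℂ) ≠ 0 := by exact_mod_cast hfn
  have hgg : (inner ℂ g g : ℂ) = 1 := by
    rw [hg, inner_smul_left, inner_smul_right, inner_self_eq_norm_sq_to_K,
      map_inv₀, Complex.conj_ofReal]
    field_simp
    rfl
  have hLpg : Lp g = (-(lam : ℂ)) • g := by
    rw [hg, LinearMap.map_smul, hf, smul_comm]
  have hgpos : ∀ z : H, (inner ℂ g z : ℂ) = 0 → z ≠ 0 → 0 < ((inner ℂ z (Lp z) : ℂ)).re := by
    intro z hz hz0
    apply hfpos z _ hz0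
    rw [hg, inner_smul_left] at hz
    simp only [map_inv₀, Complex.conj_ofReal, mul_eq_zero, inv_eq_zero] at hz
    tauto
  have hgpos' : ∀ z : H, (inner ℂ g z : ℂ) = 0 → 0 ≤ ((inner ℂ z (Lp z) : ℂ)).re := by
    intro z hz
    by_cases h0 : z = 0
    · simp [h0]
    · exact le_of_lt (hgpos z hz h0)
  -- components
  set α : ℂ := inner ℂ g h with hα
  set β : ℂ := inner ℂ g ξ₁ with hβ
  set hp : H := h - α • g with hhp
  set xp : H := ξ₁ - β • g with hxp
  have hghp : (inner ℂ g hp : ℂ) = 0 := by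
    rw [hhp, inner_sub_right, inner_smul_right, hgg, ← hα]; ring
  have hgxp : (inner ℂ g xp : ℂ) = 0 := by
    rw [hxp, inner_sub_right, inner_smul_right, hgg, ← hβ]; ring
  -- ⟨g, Lp z⟩ = -λ ⟨g, z⟩  and  ⟨z, Lp g⟩ = -λ ⟨z, g⟩
  have hgl : ∀ z : H, (inner ℂ g (Lp z) : ℂ) = -(lam : ℂ) * inner ℂ g z := by
    intro z
    rw [← hLp, hLpg, inner_smul_left]
    simp
  have hlg : ∀ z : H, (inner ℂ z (Lp g) : ℂ) = -(lam : ℂ) * inner ℂ z g := by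
    intro z
    rw [hLpg, inner_smul_right]
  have hhpg : (inner ℂ hp g : ℂ) = 0 := by
    rw [← inner_conj_symm, hghp]; simp
  have hxpg : (inner ℂ xp g : ℂ) = 0 := by
    rw [← inner_conj_symm, hgxp]; simp
  -- expansion identities
  have E1 : (inner ℂ h (Lp h) : ℂ) =
      inner ℂ hp (Lp hp) - (lam : ℂ) * (Complex.normSq α : ℝ) := by
    have hh : h = hp + α • g := by simp [hhp]
    calc (inner ℂ h (Lp h) : ℂ) = inner ℂ (hp + α • g) (Lp (hp + α • g)) := by rw [← hh]
      _ = inner ℂ hp (Lp hp) + α * inner ℂ hp (Lp g) + (starRingEnd ℂ) α * inner ℂ g (Lp hp)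
            + (starRingEnd ℂ) α * α * inner ℂ g (Lp g) := by
          simp only [map_add, map_smul, inner_add_left, inner_add_right,
            inner_smul_left, inner_smul_right]
          ring
      _ = inner ℂ hp (Lp hp) - (lam : ℂ) * (Complex.normSq α : ℝ) := by
          rw [hlg, hgl, hgl, hhpg, hghp, hgg]
          rw [mul_comm ((starRingEnd ℂ) α) α, Complex.mul_conj]
          ring
  have E2 : (inner ℂ ξ₁ (Lp ξ₁) : ℂ) =
      inner ℂ xp (Lp xp) - (lam : ℂ) * (Complex.normSq β : ℝ) := by
    have hh : ξ₁ = xp + β • g := by simp [hxp]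
    calc (inner ℂ ξ₁ (Lp ξ₁) : ℂ) = inner ℂ (xp + β • g) (Lp (xp + β • g)) := by rw [← hh]
      _ = inner ℂ xp (Lp xp) + β * inner ℂ xp (Lp g) + (starRingEnd ℂ) β * inner ℂ g (Lp xp)
            + (starRingEnd ℂ) β * β * inner ℂ g (Lp g) := by
          simp only [map_add, map_smul, inner_add_left, inner_add_right,
            inner_smul_left, inner_smul_right]
          ring
      _ = _ := by
          rw [hlg, hgl, hgl, hxpg, hgxp, hgg]
          rw [mul_comm ((starRingEnd ℂ) β) β, Complex.mul_conj]
          ring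
  -- ⟨h, Lp ξ₁⟩ = 0
  have hLpxi : Lp ξ₁ = -((Complex.I * γ) • ξ₂) := by
    rw [← hξ2]; simp
  have E0 : (inner ℂ h (Lp ξ₁) : ℂ) = 0 := by
    rw [hLpxi, inner_neg_right, inner_smul_right]
    rw [← inner_conj_symm, hperp]
    simp
  have E3 : (inner ℂ hp (Lp xp) : ℂ) = (lam : ℂ) * (starRingEnd ℂ) α * β := by
    have hh : h = hp + α • g := by simp [hhp]
    have hx : ξ₁ = xp + β • g := by simp [hxp]
    have E0' : (inner ℂ h (Lp ξ₁) : ℂ) =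
        inner ℂ hp (Lp xp) - (lam : ℂ) * (starRingEnd ℂ) α * β := by
      calc (inner ℂ h (Lp ξ₁) : ℂ) = inner ℂ (hp + α • g) (Lp (xp + β • g)) := by
            rw [← hh, ← hx]
        _ = inner ℂ hp (Lp xp) + β * inner ℂ hp (Lp g) + (starRingEnd ℂ) α * inner ℂ g (Lp xp)
              + (starRingEnd ℂ) α * β * inner ℂ g (Lp g) := by
            simp only [map_add, map_smul, inner_add_left, inner_add_right,
              inner_smul_left, inner_smul_right]
            ring
        _ = _ := by
            rw [hlg, hgl, hgl, hhpg, hgxp, hgg]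
            ring
    rw [E0] at E0'
    linear_combination -E0'
  -- negativity of ⟨ξ₁, Lp ξ₁⟩
  have hnegp : ((inner ℂ ξ₁ (Lp ξ₁) : ℂ)).re < 0 := by
    have hc : (inner ℂ ξ₂ (Lm ξ₂) : ℂ) = (starRingEnd ℂ) (inner ℂ ξ₁ (Lp ξ₁) : ℂ) := by
      rw [hξ1, inner_smul_right, hLpxi, inner_neg_right, inner_smul_right]
      rw [← inner_conj_symm ξ₁ ξ₂]
      simp [Complex.conj_ofReal]
    rw [hc] at hneg
    simp only [Complex.add_re, Complex.conj_re] at hneg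
    linarith
  -- real quantities
  set Ph : ℝ := ((inner ℂ hp (Lp hp) : ℂ)).re with hPh
  set Px : ℝ := ((inner ℂ xp (Lp xp) : ℂ)).re with hPx
  set a : ℝ := Complex.normSq α with ha
  set b : ℝ := Complex.normSq β with hb
  have hPh0 : 0 ≤ Ph := hgpos' hp hghp
  have hPx0 : 0 ≤ Px := hgpos' xp hgxp
  have hE2re : Px - lam * b < 0 := by
    have := congrArg Complex.re E2
    simp only [Complex.sub_re, Complex.mul_re, Complex.ofReal_re, Complex.ofReal_im,
      Complex.neg_re, Complex.neg_im] at this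
    rw [this] at hnegp
    simpa using hnegp
  have hbpos : 0 < b := by nlinarith
  have hβ0 : β ≠ 0 := by
    intro h0
    rw [hb, h0] at hbpos
    simp at hbpos
  by_cases hα0 : α = 0
  · -- h ⊥ g already
    have : hp = h := by simp [hhp, hα0]
    have := hgpos h (by rw [hα] at hα0; exact hα0) hne
    exact this
  · have hapos : 0 < a := by
      rw [ha]
      exact Complex.normSq_pos.mpr hα0
    -- xp ≠ 0
    have hE3ne : (inner ℂ hp (Lp xp) : ℂ) ≠ 0 := by
      rw [E3]
      simp only [mul_ne_zero_iff, ne_eq, map_eq_zero]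
      refine ⟨⟨?_, hα0⟩, hβ0⟩
      exact_mod_cast ne_of_gt hlam
    have hxp0 : xp ≠ 0 := by
      intro h0
      rw [h0] at hE3ne
      simp at hE3ne
    have hPxpos : 0 < Px := hgpos xp hgxp hxp0
    -- Cauchy-Schwarz
    have hcs := auxCS_14 Lp hLp g hgpos' hp xp hghp hgxp hPxpos
    rw [E3] at hcs
    have hcsval : lam ^ 2 * a * b ≤ Ph * Px := by
      have heq : Complex.normSq ((lam : ℂ) * (starRingEnd ℂ) α * β) = lam ^ 2 * a * b := by
        rw [Complex.normSq_mul, Complex.normSq_mul, Complex.normSq_conj,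
          Complex.normSq_ofReal, ← ha, ← hb]
        ring
      rw [heq] at hcs
      exact hcs
    -- conclude
    have hlab : 0 < lam ^ 2 * a * b :=
      mul_pos (mul_pos (pow_pos hlam 2) hapos) hbpos
    have hPhpos : 0 < Ph := by nlinarith [hcsval, hlab, hPxpos]
    have hmono : Ph * Px < Ph * (lam * b) :=
      mul_lt_mul_of_pos_left (by linarith) hPhpos
    have hstep : lam ^ 2 * a * b < Ph * (lam * b) := lt_of_le_of_lt hcsval hmono
    have hkey : lam * a < Ph := by
      have hlb : 0 < lam * b := mul_pos hlam hbpos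
      have h2 : (lam * a) * (lam * b) < Ph * (lam * b) := by
        have he : (lam * a) * (lam * b) = lam ^ 2 * a * b := by ring
        rw [he]; exact hstep
      exact lt_of_mul_lt_mul_right h2 hlb.le
    have hE1re : ((inner ℂ h (Lp h) : ℂ)).re = Ph - lam * a := by
      have := congrArg Complex.re E1
      simpa using this
    rw [hE1re]
    linarith
end

section
/- (Coercivity lemma, part 3) Under the hypotheses that both L₊ and L₋ are self-adjoint with exactly one-dimensional negative subspaces (L₊f = −λf, λ>0, L₊|_{f⊥} > 0; L₋g = −νg, ν>0, L₋|_{g⊥} > 0), and that J𝓛 has an eigenvector ξ = (ξ₁,ξ₂) with ⟨ξ, 𝓛ξ⟩ < 0, every eigenvalue ζ of J𝓛 = [[0,L₋],[−L₊,0]] satisfies ζ ∈ iℝ. -/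
open ComplexConjugate

private lemma symm_real {H : Type*} [NormedAddCommGroup H] [InnerProductSpace ℂ H]
    (L : H →ₗ[ℂ] H) (hL : ∀ x y : H, (inner ℂ (L x) y : ℂ) = inner ℂ x (L y)) (x : H) :
    conj ((inner ℂ x (L x) : ℂ)) = (inner ℂ x (L x) : ℂ) := by
  have h1 := hL x x
  have h2 := inner_conj_symm (𝕜 := ℂ) x (L x)
  rw [h1] at h2
  exact h2

private lemma sum_zero {H : Type*} [NormedAddCommGroup H] [InnerProductSpace ℂ H]
    (Lp Lm : H →ₗ[ℂ] H)
    (hLp : ∀ x y : H, (inner ℂ (Lp x) y : ℂ) = inner ℂ x (Lp y))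
    (hLm : ∀ x y : H, (inner ℂ (Lm x) y : ℂ) = inner ℂ x (Lm y))
    (ζ : ℂ) (η₁ η₂ : H) (hζ : ζ.re ≠ 0)
    (h1 : Lm η₂ = ζ • η₁) (h2 : -(Lp η₁) = ζ • η₂) :
    (inner ℂ η₁ (Lp η₁) : ℂ) + (inner ℂ η₂ (Lm η₂) : ℂ) = 0 := by
  have hLpη : Lp η₁ = (-ζ) • η₂ := by rw [neg_smul, ← h2, neg_neg]
  set a : ℂ := (inner ℂ η₁ η₂ : ℂ) with ha
  have hB : (inner ℂ η₁ (Lp η₁) : ℂ) = -ζ * a := by rw [hLpη, inner_smul_right]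
  have hC : (inner ℂ η₂ (Lm η₂) : ℂ) = ζ * conj a := by
    rw [h1, inner_smul_right, ha, inner_conj_symm]
  have r1 : conj (-ζ * a) = -ζ * a := by rw [← hB]; exact symm_real Lp hLp η₁
  have r2 : conj (ζ * conj a) = ζ * conj a := by rw [← hC]; exact symm_real Lm hLm η₂
  simp only [map_mul, map_neg, Complex.conj_conj] at r1 r2
  have key : (ζ + conj ζ) * (conj a - a) = 0 := by linear_combination -r1 - r2
  have hne : ζ + conj ζ ≠ 0 := by
    rw [Complex.add_conj]
    simpa using hζ
  have haa : conj a = a :=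
    sub_eq_zero.mp ((mul_eq_zero.1 key).resolve_left hne)
  rw [hB, hC, haa]; ring

private lemma orth_aux {H : Type*} [NormedAddCommGroup H] [InnerProductSpace ℂ H]
    (Lp Lm : H →ₗ[ℂ] H)
    (hLp : ∀ x y : H, (inner ℂ (Lp x) y : ℂ) = inner ℂ x (Lp y))
    (hLm : ∀ x y : H, (inner ℂ (Lm x) y : ℂ) = inner ℂ x (Lm y))
    (mu : ℂ) (ξ₁ ξ₂ : H) (hμ : mu.re = 0)
    (hξ1 : Lm ξ₂ = mu • ξ₁) (hξ2 : -(Lp ξ₁) = mu • ξ₂)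
    (ζ : ℂ) (η₁ η₂ : H) (hζ : ζ.re ≠ 0)
    (hη1 : Lm η₂ = ζ • η₁) (hη2 : -(Lp η₁) = ζ • η₂) :
    (inner ℂ ξ₁ η₂ : ℂ) = 0 ∧ (inner ℂ ξ₂ η₁ : ℂ) = 0 := by
  have hLpξ : Lp ξ₁ = (-mu) • ξ₂ := by rw [neg_smul, ← hξ2, neg_neg]
  have hLpη : Lp η₁ = (-ζ) • η₂ := by rw [neg_smul, ← hη2, neg_neg]
  set p : ℂ := (inner ℂ ξ₁ η₂ : ℂ) with hp
  set q : ℂ := (inner ℂ ξ₂ η₁ : ℂ) with hq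
  have eqA : conj mu * p = ζ * q := by
    have := hLm ξ₂ η₂
    rwa [hξ1, hη1, inner_smul_left, inner_smul_right] at this
  have eqB : conj mu * q = ζ * p := by
    have := hLp ξ₁ η₁
    rw [hLpξ, hLpη, inner_smul_left, inner_smul_right, map_neg] at this
    linear_combination -this
  have h1 : (ζ - conj mu) * (p + q) = 0 := by linear_combination -eqA - eqB
  have h2 : (ζ + conj mu) * (q - p) = 0 := by linear_combination eqB - eqA
  have hz1 : ζ - conj mu ≠ 0 := by
    intro h
    have : (ζ - conj mu).re = 0 := by rw [h]; simp
    rw [Complex.sub_re, Complex.conj_re, hμ] at this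
    simp at this; exact hζ this
  have hz2 : ζ + conj mu ≠ 0 := by
    intro h
    have : (ζ + conj mu).re = 0 := by rw [h]; simp
    rw [Complex.add_re, Complex.conj_re, hμ] at this
    simp at this; exact hζ this
  have hpq : p + q = 0 := (mul_eq_zero.1 h1).resolve_left hz1
  have hqp : q - p = 0 := (mul_eq_zero.1 h2).resolve_left hz2
  constructor
  · linear_combination (hpq - hqp) / 2
  · linear_combination (hpq + hqp) / 2

private lemma key_pos {H : Type*} [NormedAddCommGroup H] [InnerProductSpace ℂ H]
    (L : H →ₗ[ℂ] H) (hL : ∀ x y : H, (inner ℂ (L x) y : ℂ) = inner ℂ x (L y))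
    (f : H) (hfpos : ∀ h : H, (inner ℂ f h : ℂ) = 0 → h ≠ 0 → 0 < ((inner ℂ h (L h) : ℂ)).re)
    (w : H) (hw : ((inner ℂ w (L w) : ℂ)).re < 0)
    (h : H) (hh : h ≠ 0) (horth : (inner ℂ w (L h) : ℂ) = 0) :
    0 < ((inner ℂ h (L h) : ℂ)).re := by
  by_contra hB
  push_neg at hB
  have hw0 : w ≠ 0 := by rintro rfl; simp at hw
  have hBw : (inner ℂ w (L w) : ℂ) ≠ 0 := by
    intro h0; rw [h0] at hw; simp at hw
  have hfw : (inner ℂ f w : ℂ) ≠ 0 := fun h0 => absurd (hfpos w h0 hw0) (by linarith)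
  set c : ℂ := (inner ℂ f h : ℂ) / (inner ℂ f w : ℂ) with hc
  set v : H := h - c • w with hv
  have hfv : (inner ℂ f v : ℂ) = 0 := by
    rw [hv, inner_sub_right, inner_smul_right, hc]
    field_simp
    ring
  have hv0 : v ≠ 0 := by
    intro h0
    have heq : h = c • w := by rw [hv, sub_eq_zero] at h0; exact h0
    have : (inner ℂ w (L h) : ℂ) = c * (inner ℂ w (L w) : ℂ) := by
      rw [heq, map_smul, inner_smul_right]
    rw [horth] at this
    have hc0 : c = 0 := by
      rcases mul_eq_zero.1 this.symm with h' | h'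
      · exact h'
      · exact absurd h' hBw
    rw [hc0, zero_smul] at heq
    exact hh heq
  have hhLw : (inner ℂ h (L w) : ℂ) = 0 := by
    rw [← hL, ← inner_conj_symm, horth, map_zero]
  have hBv : (inner ℂ v (L v) : ℂ)
      = (inner ℂ h (L h) : ℂ) + (Complex.normSq c : ℂ) * (inner ℂ w (L w) : ℂ) := by
    rw [hv, map_sub, map_smul, inner_sub_left, inner_sub_right, inner_sub_right,
      inner_smul_left, inner_smul_right, inner_smul_left, inner_smul_right,
      horth, hhLw]
    rw [Complex.normSq_eq_conj_mul_self]
    ring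
  have hpos := hfpos v hfv hv0
  rw [hBv] at hpos
  rw [Complex.add_re, Complex.re_ofReal_mul] at hpos
  nlinarith [Complex.normSq_nonneg c]

/-- Coercivity lemma, part 3: if both `L₊` and `L₋` have exactly one-dimensional
negative subspaces and `J𝓛 = [[0,L₋],[−L₊,0]]` has an eigenvector `ξ` with
negative linearized energy, then every eigenvalue of `J𝓛` is purely
imaginary. -/
theorem stmt_15 {H : Type*} [NormedAddCommGroup H] [InnerProductSpace ℂ H]
    (Lp Lm : H →ₗ[ℂ] H)
    (hLp : ∀ x y : H, (inner ℂ (Lp x) y : ℂ) = inner ℂ x (Lp y))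
    (hLm : ∀ x y : H, (inner ℂ (Lm x) y : ℂ) = inner ℂ x (Lm y))
    (f : H) (hf0 : f ≠ 0) (lam : ℝ) (hlam : 0 < lam)
    (hf : Lp f = (-(lam : ℂ)) • f)
    (hfpos : ∀ h : H, (inner ℂ f h : ℂ) = 0 → h ≠ 0 → 0 < ((inner ℂ h (Lp h) : ℂ)).re)
    (g : H) (hg0 : g ≠ 0) (nu : ℝ) (hnu : 0 < nu)
    (hg : Lm g = (-(nu : ℂ)) • g)
    (hgpos : ∀ h : H, (inner ℂ g h : ℂ) = 0 → h ≠ 0 → 0 < ((inner ℂ h (Lm h) : ℂ)).re)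
    (ξ₁ ξ₂ : H) (mu : ℂ)
    (hξ1 : Lm ξ₂ = mu • ξ₁) (hξ2 : -(Lp ξ₁) = mu • ξ₂)
    (hneg : ((inner ℂ ξ₁ (Lp ξ₁) : ℂ) + (inner ℂ ξ₂ (Lm ξ₂) : ℂ)).re < 0) :
    ∀ (ζ : ℂ) (η₁ η₂ : H), ¬(η₁ = 0 ∧ η₂ = 0) →
      Lm η₂ = ζ • η₁ → -(Lp η₁) = ζ • η₂ → ζ.re = 0 := by
  intro ζ η₁ η₂ hne hη1 hη2
  by_contra hre
  -- the components of the eigenvector are nonzero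
  have hη₁0 : η₁ ≠ 0 := by
    rintro rfl
    rw [map_zero, neg_zero] at hη2
    rcases (smul_eq_zero.1 hη2.symm) with h | h
    · rw [h] at hre; simp at hre
    · exact hne ⟨rfl, h⟩
  have hη₂0 : η₂ ≠ 0 := by
    rintro rfl
    rw [map_zero] at hη1
    rcases (smul_eq_zero.1 hη1.symm) with h | h
    · rw [h] at hre; simp at hre
    · exact hne ⟨h, rfl⟩
  -- mu is purely imaginary
  have hμre : mu.re = 0 := by
    by_contra hμ
    have h0 := sum_zero Lp Lm hLp hLm mu ξ₁ ξ₂ hμ hξ1 hξ2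
    rw [h0] at hneg
    simp at hneg
  -- both diagonal energies of ξ are negative
  have hLpξ : Lp ξ₁ = (-mu) • ξ₂ := by rw [neg_smul, ← hξ2, neg_neg]
  have hconjmu : conj mu = -mu := by
    apply Complex.ext <;> simp [hμre]
  have hCB : (inner ℂ ξ₂ (Lm ξ₂) : ℂ) = (inner ℂ ξ₁ (Lp ξ₁) : ℂ) := by
    have hB : (inner ℂ ξ₁ (Lp ξ₁) : ℂ) = -mu * (inner ℂ ξ₁ ξ₂ : ℂ) := by
      rw [hLpξ, inner_smul_right]
    have hC : (inner ℂ ξ₂ (Lm ξ₂) : ℂ) = mu * conj ((inner ℂ ξ₁ ξ₂ : ℂ)) := by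
      rw [hξ1, inner_smul_right, inner_conj_symm]
    have hr := symm_real Lp hLp ξ₁
    rw [hB] at hr ⊢
    rw [hC]
    rw [map_mul, map_neg, hconjmu] at hr
    linear_combination hr
  have hBneg : ((inner ℂ ξ₁ (Lp ξ₁) : ℂ)).re < 0 := by
    rw [Complex.add_re, hCB] at hneg; linarith
  have hCneg : ((inner ℂ ξ₂ (Lm ξ₂) : ℂ)).re < 0 := by rw [hCB]; exact hBneg
  -- symplectic orthogonality
  obtain ⟨hp, hq⟩ := orth_aux Lp Lm hLp hLm mu ξ₁ ξ₂ hμre hξ1 hξ2 ζ η₁ η₂ hre hη1 hη2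
  have hLpη : Lp η₁ = (-ζ) • η₂ := by rw [neg_smul, ← hη2, neg_neg]
  -- positivity of both diagonal energies of η
  have hB1 : 0 < ((inner ℂ η₁ (Lp η₁) : ℂ)).re := by
    refine key_pos Lp hLp f hfpos ξ₁ hBneg η₁ hη₁0 ?_
    rw [hLpη, inner_smul_right, hp, mul_zero]
  have hB2 : 0 < ((inner ℂ η₂ (Lm η₂) : ℂ)).re := by
    refine key_pos Lm hLm g hgpos ξ₂ hCneg η₂ hη₂0 ?_
    rw [hη1, inner_smul_right, hq, mul_zero]
  have hz := sum_zero Lp Lm hLp hLm ζ η₁ η₂ hre hη1 hη2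
  have := congrArg Complex.re hz
  rw [Complex.add_re, Complex.zero_re] at this
  linarith
end
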